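/- arXiv:1312.7548 — 13 statements merged into one kernel-verified Lean document; each statement's English description precedes it below -/
import Mathlib

section
/- For every positive integer n, the number 2(2n+1)(2n+3)·C(2n,n) divides 3·C(6n,3n)·C(3n,n); equivalently, writing S_n = C(6n,3n)·C(3n,n)/(2(2n+1)·C(2n,n)) (which is an integer), we have 3·S_n ≡ 0 (mod 2n+3). -/
open Nat Finset

/-- Pull a factor's modulus inside: `(a * (n % q)) % q = (a * n) % q`. -/
private lemma sun_mul_mod (a n q : ℕ) : (a * (n % q)) % q = a * n % q := by
  rw [Nat.mul_mod a (n % q) q, Nat.mod_mod_of_dvd n dvd_rfl, ← Nat.mul_mod]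

/-- If there is a carry adding `n + n` at level `q`, there is a carry in `3n + 3n` or `n + 2n`. -/
private lemma sun_carry_union {q n : ℕ} (hq : 0 < q) (h : q ≤ n % q + n % q) :
    q ≤ 3 * n % q + 3 * n % q ∨ q ≤ n % q + 2 * n % q := by
  set r := n % q with hr
  have hrq : r < q := Nat.mod_lt _ hq
  have h3 : 3 * n % q = 3 * r % q := (sun_mul_mod 3 n q).symm
  have h2 : 2 * n % q = 2 * r % q := (sun_mul_mod 2 n q).symm
  rcases lt_or_ge (3 * r) (2 * q) with hc | hc
  · left
    have e : 3 * r % q = 3 * r - q := by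
      rw [Nat.mod_eq_sub_mod (by omega), Nat.mod_eq_of_lt (by omega)]
    omega
  · right
    have e : 2 * r % q = 2 * r - q := by
      rw [Nat.mod_eq_sub_mod (by omega), Nat.mod_eq_of_lt (by omega)]
    omega

/-- If odd `q ≥ 3` divides `2n+1`, then `2 (n % q) + 1 = q`. -/
private lemma sun_residue_one {n q : ℕ} (hq3 : 3 ≤ q) (hodd : q % 2 = 1)
    (hdvd : q ∣ 2 * n + 1) : 2 * (n % q) + 1 = q := by
  obtain ⟨c, hc⟩ := hdvd
  have hc0 : c ≠ 0 := by rintro rfl; omega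
  obtain ⟨d, rfl⟩ : ∃ d, c = d + 1 := ⟨c - 1, by omega⟩
  have h2n : 2 * n % q = q - 1 := by
    have hx : 2 * n = q * d + (q - 1) := by
      have : 2 * n + 1 = q * d + q := by rw [hc]; ring
      omega
    rw [hx, Nat.mul_add_mod, Nat.mod_eq_of_lt (by omega)]
  have h2r : 2 * (n % q) % q = q - 1 := by rw [sun_mul_mod]; exact h2n
  have hrq : n % q < q := Nat.mod_lt _ (by omega)
  rcases lt_or_ge (2 * (n % q)) q with h | h
  · rw [Nat.mod_eq_of_lt h] at h2r; omega
  · have e : 2 * (n % q) % q = 2 * (n % q) - q := by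
      rw [Nat.mod_eq_sub_mod h, Nat.mod_eq_of_lt (by omega)]
    omega

/-- If odd `q ≥ 5` divides `2n+3`, then `2 (n % q) + 3 = q`. -/
private lemma sun_residue_three {n q : ℕ} (hq5 : 5 ≤ q) (hodd : q % 2 = 1)
    (hdvd : q ∣ 2 * n + 3) : 2 * (n % q) + 3 = q := by
  obtain ⟨c, hc⟩ := hdvd
  have hc0 : c ≠ 0 := by rintro rfl; omega
  obtain ⟨d, rfl⟩ : ∃ d, c = d + 1 := ⟨c - 1, by omega⟩
  have h2n : 2 * n % q = q - 3 := by
    have hx : 2 * n = q * d + (q - 3) := by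
      have : 2 * n + 3 = q * d + q := by rw [hc]; ring
      omega
    rw [hx, Nat.mul_add_mod, Nat.mod_eq_of_lt (by omega)]
  have h2r : 2 * (n % q) % q = q - 3 := by rw [sun_mul_mod]; exact h2n
  have hrq : n % q < q := Nat.mod_lt _ (by omega)
  rcases lt_or_ge (2 * (n % q)) q with h | h
  · rw [Nat.mod_eq_of_lt h] at h2r; omega
  · have e : 2 * (n % q) % q = 2 * (n % q) - q := by
      rw [Nat.mod_eq_sub_mod h, Nat.mod_eq_of_lt (by omega)]
    omega

theorem sun_conjecture_3i (n : ℕ) (hn : 0 < n) :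
    2 * (2 * n + 1) * (2 * n + 3) * Nat.choose (2 * n) n ∣
      3 * (Nat.choose (6 * n) (3 * n) * Nat.choose (3 * n) n) := by
  have h2n : 0 < Nat.choose (2 * n) n := Nat.choose_pos (by omega)
  have h6n : 0 < Nat.choose (6 * n) (3 * n) := Nat.choose_pos (by omega)
  have h3n : 0 < Nat.choose (3 * n) n := Nat.choose_pos (by omega)
  rw [← Nat.factorization_le_iff_dvd (by positivity) (by positivity), Finsupp.le_def]
  intro p
  by_cases hp : p.Prime
  swap
  · simp [Nat.factorization_eq_zero_of_not_prime _ hp]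
  haveI hfact : Fact p.Prime := ⟨hp⟩
  have hp1 : 1 < p := hp.one_lt
  -- expand the factorizations of the products
  have hBf : (2 * (2 * n + 1) * (2 * n + 3) * Nat.choose (2 * n) n).factorization p
      = (2 : ℕ).factorization p + (2 * n + 1).factorization p + (2 * n + 3).factorization p
        + (Nat.choose (2 * n) n).factorization p := by
    rw [Nat.factorization_mul (by positivity) h2n.ne',
      Nat.factorization_mul (by positivity) (show (2 * n + 3 : ℕ) ≠ 0 by omega),
      Nat.factorization_mul (show (2 : ℕ) ≠ 0 by norm_num) (show (2 * n + 1 : ℕ) ≠ 0 by omega)]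
    simp
  have hAf : (3 * (Nat.choose (6 * n) (3 * n) * Nat.choose (3 * n) n)).factorization p
      = (3 : ℕ).factorization p + (Nat.choose (6 * n) (3 * n)).factorization p
        + (Nat.choose (3 * n) n).factorization p := by
    rw [Nat.factorization_mul (show (3 : ℕ) ≠ 0 by norm_num) (by positivity),
      Nat.factorization_mul h6n.ne' h3n.ne']
    simp [add_assoc]
  rw [hBf, hAf]
  set b : ℕ := Nat.log p (6 * n) + 1 with hb
  have hb6 : Nat.log p (6 * n) < b := Nat.lt_succ_self _
  have hb3 : Nat.log p (3 * n) < b := lt_of_le_of_lt (Nat.log_mono_right (by omega)) hb6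
  have hb2 : Nat.log p (2 * n) < b := lt_of_le_of_lt (Nat.log_mono_right (by omega)) hb6
  -- Kummer's theorem for the three binomial coefficients
  have e11 : (Nat.choose (2 * n) n).factorization p
      = ((Finset.Ico 1 b).filter fun i => p ^ i ≤ n % p ^ i + n % p ^ i).card := by
    rw [Nat.factorization_def _ hp, padicValNat_choose (by omega) hb2]
    simp only [show 2 * n - n = n by omega]
  have e12 : (Nat.choose (3 * n) n).factorization p
      = ((Finset.Ico 1 b).filter fun i => p ^ i ≤ n % p ^ i + 2 * n % p ^ i).card := by
    rw [Nat.factorization_def _ hp, padicValNat_choose (by omega) hb3]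
    simp only [show 3 * n - n = 2 * n by omega]
  have e63 : (Nat.choose (6 * n) (3 * n)).factorization p
      = ((Finset.Ico 1 b).filter fun i => p ^ i ≤ 3 * n % p ^ i + 3 * n % p ^ i).card := by
    rw [Nat.factorization_def _ hp, padicValNat_choose (by omega) hb6]
    simp only [show 6 * n - 3 * n = 3 * n by omega]
  rw [e11, e12, e63]
  set S11 := (Finset.Ico 1 b).filter fun i => p ^ i ≤ n % p ^ i + n % p ^ i with hS11
  set S12 := (Finset.Ico 1 b).filter fun i => p ^ i ≤ n % p ^ i + 2 * n % p ^ i with hS12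
  set S63 := (Finset.Ico 1 b).filter fun i => p ^ i ≤ 3 * n % p ^ i + 3 * n % p ^ i with hS63
  set E := (Finset.Ico 1 b).filter
    (fun i => n % p ^ i + n % p ^ i < p ^ i ∧ p ^ i ≤ 6 * (n % p ^ i)) with hE
  -- counting: S11 ∪ E ⊆ S63 ∪ S12, disjointly
  have hqpos : ∀ i : ℕ, 0 < p ^ i := fun i => pow_pos hp.pos i
  have hsub : S11 ∪ E ⊆ S63 ∪ S12 := by
    intro i hi
    simp only [Finset.mem_union, Finset.mem_filter, hS11, hS12, hS63, hE] at hi ⊢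
    rcases hi with ⟨hi0, hi1⟩ | ⟨hi0, hi1, hi2⟩
    · rcases sun_carry_union (hqpos i) hi1 with h | h
      · exact Or.inl ⟨hi0, h⟩
      · exact Or.inr ⟨hi0, h⟩
    · set r := n % p ^ i with hr
      have hrq : r < p ^ i := Nat.mod_lt _ (hqpos i)
      have h3 : 3 * n % p ^ i = 3 * r % p ^ i := (sun_mul_mod 3 n (p ^ i)).symm
      have h2 : 2 * n % p ^ i = 2 * r % p ^ i := (sun_mul_mod 2 n (p ^ i)).symm
      rcases lt_or_ge (3 * r) (p ^ i) with hc | hc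
      · left
        refine ⟨hi0, ?_⟩
        rw [h3, Nat.mod_eq_of_lt hc]
        omega
      · right
        refine ⟨hi0, ?_⟩
        rw [h2, Nat.mod_eq_of_lt (by omega)]
        omega
  have hdisj : Disjoint S11 E := by
    rw [Finset.disjoint_left]
    intro i hi1 hi2
    rw [hS11, Finset.mem_filter] at hi1
    rw [hE, Finset.mem_filter] at hi2
    omega
  have hcard : S11.card + E.card ≤ S63.card + S12.card := by
    calc S11.card + E.card = (S11 ∪ E).card := (Finset.card_union_of_disjoint hdisj).symm
      _ ≤ (S63 ∪ S12).card := Finset.card_le_card hsub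
      _ ≤ S63.card + S12.card := Finset.card_union_le _ _
  -- the extra factors are compensated by E
  have hextra : (2 : ℕ).factorization p + (2 * n + 1).factorization p
      + (2 * n + 3).factorization p ≤ (3 : ℕ).factorization p + E.card := by
    by_cases hp2 : p = 2
    · subst hp2
      have f1 : (2 * n + 1).factorization 2 = 0 :=
        Nat.factorization_eq_zero_of_not_dvd (by omega)
      have f3 : (2 * n + 3).factorization 2 = 0 :=
        Nat.factorization_eq_zero_of_not_dvd (by omega)
      have f2 : (2 : ℕ).factorization 2 = 1 := Nat.Prime.factorization_self Nat.prime_two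
      have hone : 1 ≤ E.card := by
        refine Finset.card_pos.mpr ⟨Nat.log 2 (2 * n) + 1, ?_⟩
        have hlt : 2 * n < 2 ^ (Nat.log 2 (2 * n) + 1) := Nat.lt_pow_succ_log_self (by norm_num) _
        have hle : 2 ^ (Nat.log 2 (2 * n) + 1) ≤ 4 * n := by
          rw [pow_succ]
          have := Nat.pow_log_le_self 2 (show 2 * n ≠ 0 by omega)
          omega
        rw [hE, Finset.mem_filter, Finset.mem_Ico]
        have hnb' : Nat.log 2 (2 * n) + 1 < b := by
          rw [hb]
          have : Nat.log 2 (2 * n) + 1 ≤ Nat.log 2 (6 * n) :=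
            (Nat.le_log_iff_pow_le (by norm_num) (show 6 * n ≠ 0 by omega)).2
              (hle.trans (by omega))
          omega
        have hmod : n % 2 ^ (Nat.log 2 (2 * n) + 1) = n := Nat.mod_eq_of_lt (by omega)
        refine ⟨⟨by omega, hnb'⟩, ?_, ?_⟩ <;> rw [hmod] <;> omega
      omega
    · have hpodd : p % 2 = 1 := Nat.odd_iff.mp (hp.odd_of_ne_two hp2)
      have hp3 : 3 ≤ p := by
        rcases hp.two_le.lt_or_eq with h | h
        · omega
        · omega
      have f2 : (2 : ℕ).factorization p = 0 := by
        apply Nat.factorization_eq_zero_of_not_dvd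
        intro hdvd
        exact absurd (Nat.le_of_dvd (by norm_num) hdvd) (by omega)
      have hqodd : ∀ i : ℕ, p ^ i % 2 = 1 := fun i =>
        Nat.odd_iff.mp ((hp.odd_of_ne_two hp2).pow)
      by_cases hd1 : p ∣ 2 * n + 1
      · have hnd3 : ¬p ∣ 2 * n + 3 := by
          intro hd3
          have hsub2 := Nat.dvd_sub hd3 hd1
          have e2 : 2 * n + 3 - (2 * n + 1) = 2 := by omega
          rw [e2] at hsub2
          have := Nat.le_of_dvd (by norm_num) hsub2
          omega
        have f3 : (2 * n + 3).factorization p = 0 :=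
          Nat.factorization_eq_zero_of_not_dvd hnd3
        set a := (2 * n + 1).factorization p with ha
        have hsubE : Finset.Ico 1 (a + 1) ⊆ E := by
          intro i hi
          rw [Finset.mem_Ico] at hi
          have hdvdi : p ^ i ∣ 2 * n + 1 :=
            dvd_trans (pow_dvd_pow p (by omega)) (Nat.ordProj_dvd _ p)
          have hq3 : 3 ≤ p ^ i := le_trans hp3 (Nat.le_self_pow (by omega) p)
          have hres := sun_residue_one hq3 (hqodd i) hdvdi
          have hib : i < b := by
            rw [hb]
            have hle : p ^ i ≤ 6 * n := (Nat.le_of_dvd (by omega) hdvdi).trans (by omega)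
            have : i ≤ Nat.log p (6 * n) :=
              (Nat.le_log_iff_pow_le hp1 (show 6 * n ≠ 0 by omega)).2 hle
            omega
          rw [hE, Finset.mem_filter, Finset.mem_Ico]
          exact ⟨⟨by omega, hib⟩, by omega, by omega⟩
        have : a ≤ E.card := by
          calc a = (Finset.Ico 1 (a + 1)).card := by rw [Nat.card_Ico]; omega
            _ ≤ E.card := Finset.card_le_card hsubE
        omega
      · have f1 : (2 * n + 1).factorization p = 0 :=
          Nat.factorization_eq_zero_of_not_dvd hd1
        by_cases hd3 : p ∣ 2 * n + 3
        · set a := (2 * n + 3).factorization p with ha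
          have hmem : ∀ i, 1 ≤ i → i ≤ a → 5 ≤ p ^ i → i ∈ E := by
            intro i hi1 hia hq5
            have hdvdi : p ^ i ∣ 2 * n + 3 :=
              dvd_trans (pow_dvd_pow p hia) (Nat.ordProj_dvd _ p)
            have hres := sun_residue_three hq5 (hqodd i) hdvdi
            have hib : i < b := by
              rw [hb]
              have hle : p ^ i ≤ 6 * n := (Nat.le_of_dvd (by omega) hdvdi).trans (by omega)
              have : i ≤ Nat.log p (6 * n) :=
                (Nat.le_log_iff_pow_le hp1 (show 6 * n ≠ 0 by omega)).2 hle
              omega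
            rw [hE, Finset.mem_filter, Finset.mem_Ico]
            exact ⟨⟨hi1, hib⟩, by omega, by omega⟩
          by_cases hp3' : p = 3
          · subst hp3'
            have f3 : (3 : ℕ).factorization 3 = 1 :=
              Nat.Prime.factorization_self (by norm_num)
            have hsubE : Finset.Ico 2 (a + 1) ⊆ E := by
              intro i hi
              rw [Finset.mem_Ico] at hi
              refine hmem i (by omega) (by omega) ?_
              have h9 : (3 : ℕ) ^ 2 ≤ 3 ^ i := Nat.pow_le_pow_right (by norm_num) (by omega)
              omega
            have hcardE : a - 1 ≤ E.card := by
              calc a - 1 = (Finset.Ico 2 (a + 1)).card := by rw [Nat.card_Ico]; omega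
                _ ≤ E.card := Finset.card_le_card hsubE
            omega
          · have hp5 : 5 ≤ p := by omega
            have f3 : (3 : ℕ).factorization p = 0 := by
              apply Nat.factorization_eq_zero_of_not_dvd
              intro hdvd
              exact absurd (Nat.le_of_dvd (by norm_num) hdvd) (by omega)
            have hsubE : Finset.Ico 1 (a + 1) ⊆ E := by
              intro i hi
              rw [Finset.mem_Ico] at hi
              refine hmem i (by omega) (by omega) ?_
              calc (5 : ℕ) ≤ p := hp5
                _ ≤ p ^ i := Nat.le_self_pow (by omega) p
            have hcardE : a ≤ E.card := by
              calc a = (Finset.Ico 1 (a + 1)).card := by rw [Nat.card_Ico]; omega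
                _ ≤ E.card := Finset.card_le_card hsubE
            omega
        · have f3' : (2 * n + 3).factorization p = 0 :=
            Nat.factorization_eq_zero_of_not_dvd hd3
          omega
  omega
end

section
/- For every positive integer n, the number (10n+1)(10n+3)·C(3n,n) divides 21·C(15n,5n)·C(5n−1,n−1); equivalently, writing t_n = C(15n,5n)·C(5n−1,n−1)/((10n+1)·C(3n,n)) (which is an integer), we have 21·t_n ≡ 0 (mod 10n+3). -/
open Finset Nat



section helpers

lemma mod_add_split (q x y : ℕ) (hq : 0 < q) :
    (x + y) % q = x % q + y % q ∨ (x + y) % q + q = x % q + y % q := by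
  have h1 : (x + y) % q = (x % q + y % q) % q := Nat.add_mod x y q
  have hx : x % q < q := Nat.mod_lt _ hq
  have hy : y % q < q := Nat.mod_lt _ hq
  rcases Nat.lt_or_ge (x % q + y % q) q with h | h
  · left; rw [h1, Nat.mod_eq_of_lt h]
  · right
    rw [h1, Nat.mod_eq_sub_mod h, Nat.mod_eq_of_lt (by omega)]
    omega

lemma mod_of_dvd_shift {q n r : ℕ} (hr : 0 < r) (hrq : r < q) (hd : q ∣ 10*n + r) :
    10*n % q = q - r := by
  obtain ⟨c, hc⟩ := hd
  match c with
  | 0 => omega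
  | (c+1) =>
    have h10 : 10*n = q*c + (q - r) := by
      have : q*(c+1) = q*c + q := by ring
      omega
    rw [h10, Nat.mul_add_mod, Nat.mod_eq_of_lt (by omega)]

lemma div_ineq_of_mod1 (q n : ℕ) (hq : 0 < q)
    (h : 15*n % q + 2*n % q + q ≤ 10*n % q + 4*n % q + 3*n % q) :
    10*n/q + 4*n/q + 3*n/q + 1 ≤ 15*n/q + 2*n/q := by
  have e15 := Nat.div_add_mod (15*n) q
  have e2 := Nat.div_add_mod (2*n) q
  have e10 := Nat.div_add_mod (10*n) q
  have e4 := Nat.div_add_mod (4*n) q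
  have e3 := Nat.div_add_mod (3*n) q
  have key : q * (10*n/q + 4*n/q + 3*n/q + 1) ≤ q * (15*n/q + 2*n/q) := by
    rw [Nat.mul_add, Nat.mul_add, Nat.mul_add, Nat.mul_one, Nat.mul_add]
    omega
  exact Nat.le_of_mul_le_mul_left key hq

lemma div_ineq_of_mod0 (q n : ℕ) (hq : 0 < q)
    (h : 15*n % q + 2*n % q ≤ 10*n % q + 4*n % q + 3*n % q) :
    10*n/q + 4*n/q + 3*n/q ≤ 15*n/q + 2*n/q := by
  have e15 := Nat.div_add_mod (15*n) q
  have e2 := Nat.div_add_mod (2*n) q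
  have e10 := Nat.div_add_mod (10*n) q
  have e4 := Nat.div_add_mod (4*n) q
  have e3 := Nat.div_add_mod (3*n) q
  have key : q * (10*n/q + 4*n/q + 3*n/q) ≤ q * (15*n/q + 2*n/q) := by
    rw [Nat.mul_add, Nat.mul_add, Nat.mul_add]
    omega
  exact Nat.le_of_mul_le_mul_left key hq

end helpers

section perQ

lemma lemA0 (n q : ℕ) : 10*n/q + 4*n/q + 3*n/q ≤ 15*n/q + 2*n/q := by
  rcases Nat.eq_zero_or_pos q with rfl | hq0
  · simp
  apply div_ineq_of_mod0 q n hq0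
  have h2 := mod_add_split q n n hq0
  have h3 := mod_add_split q (2*n) n hq0
  have h4 := mod_add_split q (3*n) n hq0
  have h5 := mod_add_split q (4*n) n hq0
  have h10 := mod_add_split q (5*n) (5*n) hq0
  have h15 := mod_add_split q (10*n) (5*n) hq0
  have r2 : n + n = 2*n := by ring
  have r3 : 2*n + n = 3*n := by ring
  have r4 : 3*n + n = 4*n := by ring
  have r5 : 4*n + n = 5*n := by ring
  have r10 : 5*n + 5*n = 10*n := by ring
  have r15 : 10*n + 5*n = 15*n := by ring
  rw [r2] at h2; rw [r3] at h3; rw [r4] at h4; rw [r5] at h5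
  rw [r10] at h10; rw [r15] at h15
  have b2 : 2*n % q < q := Nat.mod_lt _ hq0
  have b3 : 3*n % q < q := Nat.mod_lt _ hq0
  have b4 : 4*n % q < q := Nat.mod_lt _ hq0
  have b5 : 5*n % q < q := Nat.mod_lt _ hq0
  have b10 : 10*n % q < q := Nat.mod_lt _ hq0
  have b15 : 15*n % q < q := Nat.mod_lt _ hq0
  have bn : n % q < q := Nat.mod_lt _ hq0
  omega

lemma odd_of_dvd_odd {q m : ℕ} (hm : m % 2 = 1) (hd : q ∣ m) : q % 2 = 1 := by
  rcases Nat.even_or_odd q with ⟨t, rfl⟩ | ⟨t, rfl⟩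
  · obtain ⟨c, hc⟩ := hd
    have : t + t = 2 * t := by ring
    rw [this] at hc
    have h2 : 2 ∣ m := ⟨t * c, by rw [hc]; ring⟩
    omega
  · omega

lemma lemA1 (n q : ℕ) (hq2 : 2 ≤ q) (hd : q ∣ 10*n + 1) :
    10*n/q + 4*n/q + 3*n/q + 1 ≤ 15*n/q + 2*n/q := by
  have hodd : q % 2 = 1 := odd_of_dvd_odd (by omega) hd
  have hq3 : 3 ≤ q := by omega
  have hq0 : 0 < q := by omega
  have h10v : 10*n % q = q - 1 := mod_of_dvd_shift (by norm_num) (by omega) hd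
  apply div_ineq_of_mod1 q n hq0
  have h2 := mod_add_split q n n hq0
  have h3 := mod_add_split q (2*n) n hq0
  have h4 := mod_add_split q (3*n) n hq0
  have h5 := mod_add_split q (4*n) n hq0
  have h10 := mod_add_split q (5*n) (5*n) hq0
  have h15 := mod_add_split q (10*n) (5*n) hq0
  have r2 : n + n = 2*n := by ring
  have r3 : 2*n + n = 3*n := by ring
  have r4 : 3*n + n = 4*n := by ring
  have r5 : 4*n + n = 5*n := by ring
  have r10 : 5*n + 5*n = 10*n := by ring
  have r15 : 10*n + 5*n = 15*n := by ring
  rw [r2] at h2; rw [r3] at h3; rw [r4] at h4; rw [r5] at h5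
  rw [r10] at h10; rw [r15] at h15
  have b2 : 2*n % q < q := Nat.mod_lt _ hq0
  have b3 : 3*n % q < q := Nat.mod_lt _ hq0
  have b4 : 4*n % q < q := Nat.mod_lt _ hq0
  have b5 : 5*n % q < q := Nat.mod_lt _ hq0
  have b15 : 15*n % q < q := Nat.mod_lt _ hq0
  have bn : n % q < q := Nat.mod_lt _ hq0
  omega

lemma lemA2 (n q : ℕ) (hq9 : 9 ≤ q) (hd : q ∣ 10*n + 3) :
    10*n/q + 4*n/q + 3*n/q + 1 ≤ 15*n/q + 2*n/q := by
  have hodd : q % 2 = 1 := odd_of_dvd_odd (by omega) hd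
  have hq0 : 0 < q := by omega
  have h10v : 10*n % q = q - 3 := mod_of_dvd_shift (by norm_num) (by omega) hd
  apply div_ineq_of_mod1 q n hq0
  have h2 := mod_add_split q n n hq0
  have h3 := mod_add_split q (2*n) n hq0
  have h4 := mod_add_split q (3*n) n hq0
  have h5 := mod_add_split q (4*n) n hq0
  have h10 := mod_add_split q (5*n) (5*n) hq0
  have h15 := mod_add_split q (10*n) (5*n) hq0
  have r2 : n + n = 2*n := by ring
  have r3 : 2*n + n = 3*n := by ring
  have r4 : 3*n + n = 4*n := by ring
  have r5 : 4*n + n = 5*n := by ring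
  have r10 : 5*n + 5*n = 10*n := by ring
  have r15 : 10*n + 5*n = 15*n := by ring
  rw [r2] at h2; rw [r3] at h3; rw [r4] at h4; rw [r5] at h5
  rw [r10] at h10; rw [r15] at h15
  have b2 : 2*n % q < q := Nat.mod_lt _ hq0
  have b3 : 3*n % q < q := Nat.mod_lt _ hq0
  have b4 : 4*n % q < q := Nat.mod_lt _ hq0
  have b5 : 5*n % q < q := Nat.mod_lt _ hq0
  have b15 : 15*n % q < q := Nat.mod_lt _ hq0
  have bn : n % q < q := Nat.mod_lt _ hq0
  omega

end perQ


section five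

lemma lemD (m : ℕ) : ∀ b, (∑ i ∈ Ico 1 b, m / 5^i) ≤ (m-1)/4 := by
  induction m using Nat.strong_induction_on with
  | _ m IH =>
    intro b
    rcases Nat.lt_or_ge m 5 with hm | hm
    · have hz : ∀ i ∈ Ico 1 b, m / 5^i = 0 := by
        intro i hi
        apply Nat.div_eq_of_lt
        have h1 : 1 ≤ i := (mem_Ico.mp hi).1
        have : (5:ℕ)^1 ≤ 5^i := Nat.pow_le_pow_right (by norm_num) h1
        simpa using lt_of_lt_of_le hm this
      rw [Finset.sum_congr rfl hz]
      simp
    · rcases Nat.lt_or_ge b 2 with hb | hb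
      · interval_cases b <;> simp
      · have hsplit : ∑ i ∈ Ico 1 b, m / 5^i = m/5 + ∑ i ∈ Ico 2 b, m / 5^i := by
          rw [Finset.sum_eq_sum_Ico_succ_bot (by omega : 1 < b)]
          norm_num
        have hshift : ∑ i ∈ Ico 2 b, m / 5^i = ∑ i ∈ Ico 1 (b-1), (m/5) / 5^i := by
          rw [Finset.sum_Ico_eq_sum_range, Finset.sum_Ico_eq_sum_range]
          have hbb : b - 2 = b - 1 - 1 := by omega
          rw [hbb]
          apply Finset.sum_congr rfl
          intro i _
          rw [Nat.div_div_eq_div_mul]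
          congr 1
          ring
        have ha := IH (m/5) (Nat.div_lt_self (by omega) (by norm_num)) (b-1)
        rw [hsplit, hshift]
        omega

lemma shift5 (b c : ℕ) (hb : 2 ≤ b) (hc : c < 5^(b-1)) :
    (∑ i ∈ Ico 1 b, (5*c)/5^i) = c + ∑ i ∈ Ico 1 b, c/5^i := by
  have hterm : ∀ i ∈ Ico 1 b, (5*c)/5^i = c / 5^(i-1) := by
    intro i hi
    have h1 : 1 ≤ i := (mem_Ico.mp hi).1
    have h5 : (5:ℕ)^i = 5 * 5^(i-1) := by
      rw [← pow_succ']
      congr 1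
      omega
    rw [h5, Nat.mul_div_mul_left _ _ (by norm_num)]
  rw [Finset.sum_congr rfl hterm]
  have h2 : ∑ i ∈ Ico 1 b, c / 5^(i-1) = ∑ j ∈ Ico 0 (b-1), c / 5^j := by
    rw [Finset.sum_Ico_eq_sum_range, Finset.sum_Ico_eq_sum_range]
    have hbb : b - 1 - 0 = b - 1 := by omega
    rw [hbb]
    apply Finset.sum_congr rfl
    intro i _
    norm_num
  rw [h2, Finset.sum_eq_sum_Ico_succ_bot (by omega : 0 < b - 1)]
  have hlast : ∑ i ∈ Ico 1 b, c/5^i = (∑ i ∈ Ico 1 (b-1), c/5^i) + c/5^(b-1) := by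
    have hb1 : b = (b-1) + 1 := by omega
    rw [hb1, Finset.sum_Ico_succ_top (by omega)]
    have : b + 1 - 1 - 1 = b - 1 := by omega
    congr 1 <;> simp
  have hz : c/5^(b-1) = 0 := Nat.div_eq_of_lt hc
  rw [hlast, hz]
  simp [Finset.sum_Ico_eq_sum_range]

lemma lemB (n b : ℕ) (hn : 0 < n) (hb : 15*n < 5^b) :
    1 + ∑ i ∈ Ico 1 b, (10*n/5^i + 4*n/5^i + 3*n/5^i)
      ≤ ∑ i ∈ Ico 1 b, (15*n/5^i + 2*n/5^i) := by
  have hb2 : 2 ≤ b := by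
    by_contra h
    push_neg at h
    interval_cases b <;> simp_all <;> omega
  have hb5 : (5:ℕ)^b = 5 * 5^(b-1) := by
    rw [← pow_succ']
    congr 1
    omega
  have h3n : 3*n < 5^(b-1) := by omega
  have h2n : 2*n < 5^(b-1) := by omega
  have e15 : (∑ i ∈ Ico 1 b, 15*n/5^i) = 3*n + ∑ i ∈ Ico 1 b, (3*n)/5^i := by
    have h : ∀ i ∈ Ico 1 b, 15*n/5^i = (5*(3*n))/5^i := by
      intro i _
      congr 1
      ring
    rw [Finset.sum_congr rfl h, shift5 b (3*n) hb2 h3n]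
  have e10 : (∑ i ∈ Ico 1 b, 10*n/5^i) = 2*n + ∑ i ∈ Ico 1 b, (2*n)/5^i := by
    have h : ∀ i ∈ Ico 1 b, 10*n/5^i = (5*(2*n))/5^i := by
      intro i _
      congr 1
      ring
    rw [Finset.sum_congr rfl h, shift5 b (2*n) hb2 h2n]
  have e4 : (∑ i ∈ Ico 1 b, 4*n/5^i) ≤ n - 1 := by
    have := lemD (4*n) b
    have h4 : (4*n-1)/4 = n - 1 := by omega
    omega
  rw [Finset.sum_add_distrib, Finset.sum_add_distrib, Finset.sum_add_distrib, e15, e10]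
  omega

end five


lemma count_window (b j k : ℕ) (hk : k < b) (hj : 1 ≤ j) :
    ∑ i ∈ Ico 1 b, (if j ≤ i ∧ i ≤ k then 1 else 0) = k + 1 - j := by
  rw [Finset.sum_boole]
  have : (Ico 1 b).filter (fun i => j ≤ i ∧ i ≤ k) = Ico j (k+1) := by
    ext i
    simp only [mem_filter, mem_Ico]
    omega
  rw [this]
  simp [Nat.card_Ico]

lemma S_main (n p b k j : ℕ) (hk : k < b) (hj : 1 ≤ j)
    (H : ∀ i, j ≤ i → i ≤ k → 10*n/p^i + 4*n/p^i + 3*n/p^i + 1 ≤ 15*n/p^i + 2*n/p^i) :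
    (k + 1 - j) + ∑ i ∈ Ico 1 b, (10*n/p^i + 4*n/p^i + 3*n/p^i)
      ≤ ∑ i ∈ Ico 1 b, (15*n/p^i + 2*n/p^i) := by
  rw [← count_window b j k hk hj, ← Finset.sum_add_distrib]
  apply Finset.sum_le_sum
  intro i _
  by_cases h : j ≤ i ∧ i ≤ k
  · rw [if_pos h]
    have := H i h.1 h.2
    omega
  · rw [if_neg h]
    have := lemA0 n (p^i)
    omega

lemma S0 (n p b : ℕ) :
    ∑ i ∈ Ico 1 b, (10*n/p^i + 4*n/p^i + 3*n/p^i) ≤ ∑ i ∈ Ico 1 b, (15*n/p^i + 2*n/p^i) :=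
  Finset.sum_le_sum fun i _ => lemA0 n (p^i)

lemma S1 (n p b k : ℕ) (hp : 2 ≤ p) (hk : k < b) (hd : p^k ∣ 10*n + 1) :
    k + ∑ i ∈ Ico 1 b, (10*n/p^i + 4*n/p^i + 3*n/p^i)
      ≤ ∑ i ∈ Ico 1 b, (15*n/p^i + 2*n/p^i) := by
  have h := S_main n p b k 1 hk le_rfl (fun i hi1 hik => by
    apply lemA1 n (p^i) _ (dvd_trans (pow_dvd_pow p hik) hd)
    calc 2 ≤ p := hp
    _ ≤ p^i := Nat.le_self_pow (by omega) p)
  omega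

lemma S3a (n p b k : ℕ) (hp : 9 ≤ p) (hk : k < b) (hd : p^k ∣ 10*n + 3) :
    k + ∑ i ∈ Ico 1 b, (10*n/p^i + 4*n/p^i + 3*n/p^i)
      ≤ ∑ i ∈ Ico 1 b, (15*n/p^i + 2*n/p^i) := by
  have h := S_main n p b k 1 hk le_rfl (fun i hi1 hik => by
    apply lemA2 n (p^i) _ (dvd_trans (pow_dvd_pow p hik) hd)
    calc 9 ≤ p := hp
    _ ≤ p^i := Nat.le_self_pow (by omega) p)
  omega

lemma S3b (n p b k : ℕ) (hp : 3 ≤ p) (hk : k < b) (hd : p^k ∣ 10*n + 3) :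
    k + ∑ i ∈ Ico 1 b, (10*n/p^i + 4*n/p^i + 3*n/p^i)
      ≤ 1 + ∑ i ∈ Ico 1 b, (15*n/p^i + 2*n/p^i) := by
  rcases Nat.eq_zero_or_pos k with rfl | hk1
  · have := S0 n p b
    omega
  · have h := S_main n p b k 2 hk (by omega) (fun i hi2 hik => by
      apply lemA2 n (p^i) _ (dvd_trans (pow_dvd_pow p hik) hd)
      calc (9:ℕ) = 3^2 := by norm_num
      _ ≤ p^2 := Nat.pow_le_pow_left hp 2
      _ ≤ p^i := Nat.pow_le_pow_right (by omega) hi2)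
    omega


theorem keyT (n : ℕ) (hn : 0 < n) :
    5 * ((10*n+1) * ((10*n+3) * ((3*n)! * ((10*n)! * (4*n)!)))) ∣
      21 * ((15*n)! * (2*n)!) := by
  have F3 : (3*n)! ≠ 0 := (Nat.factorial_pos _).ne'
  have F10 : (10*n)! ≠ 0 := (Nat.factorial_pos _).ne'
  have F4 : (4*n)! ≠ 0 := (Nat.factorial_pos _).ne'
  have F15 : (15*n)! ≠ 0 := (Nat.factorial_pos _).ne'
  have F2 : (2*n)! ≠ 0 := (Nat.factorial_pos _).ne'
  have G1 : (10*n+1) ≠ 0 := by omega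
  have G3 : (10*n+3) ≠ 0 := by omega
  have hL : 5 * ((10*n+1) * ((10*n+3) * ((3*n)! * ((10*n)! * (4*n)!)))) ≠ 0 := by
    refine mul_ne_zero (by norm_num) (mul_ne_zero G1 (mul_ne_zero G3 (mul_ne_zero F3 (mul_ne_zero F10 F4))))
  have hR : 21 * ((15*n)! * (2*n)!) ≠ 0 :=
    mul_ne_zero (by norm_num) (mul_ne_zero F15 F2)
  rw [← Nat.factorization_le_iff_dvd hL hR]
  rw [Finsupp.le_def]
  intro p
  by_cases hp : p.Prime
  swap
  · rw [Nat.factorization_eq_zero_of_not_prime _ hp]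
    exact Nat.zero_le _
  haveI : Fact p.Prime := ⟨hp⟩
  set b := Nat.log p (15*n) + 1 with hbdef
  rw [Nat.factorization_def _ hp, Nat.factorization_def _ hp]
  rw [padicValNat.mul (by norm_num) (mul_ne_zero G1 (mul_ne_zero G3 (mul_ne_zero F3 (mul_ne_zero F10 F4))))]
  rw [padicValNat.mul G1 (mul_ne_zero G3 (mul_ne_zero F3 (mul_ne_zero F10 F4)))]
  rw [padicValNat.mul G3 (mul_ne_zero F3 (mul_ne_zero F10 F4))]
  rw [padicValNat.mul F3 (mul_ne_zero F10 F4)]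
  rw [padicValNat.mul F10 F4]
  rw [padicValNat.mul (by norm_num : (21:ℕ) ≠ 0) (mul_ne_zero F15 F2)]
  rw [padicValNat.mul F15 F2]
  have hlog15 : Nat.log p (15*n) < b := by omega
  have hlog3 : Nat.log p (3*n) < b :=
    lt_of_le_of_lt (Nat.log_mono_right (by omega)) hlog15
  have hlog10 : Nat.log p (10*n) < b :=
    lt_of_le_of_lt (Nat.log_mono_right (by omega)) hlog15
  have hlog4 : Nat.log p (4*n) < b :=
    lt_of_le_of_lt (Nat.log_mono_right (by omega)) hlog15
  have hlog2 : Nat.log p (2*n) < b :=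
    lt_of_le_of_lt (Nat.log_mono_right (by omega)) hlog15
  rw [padicValNat_factorial hlog3, padicValNat_factorial hlog10,
      padicValNat_factorial hlog4, padicValNat_factorial hlog15,
      padicValNat_factorial hlog2]
  -- combined sums
  have hsumL : ∑ i ∈ Ico 1 b, (10*n/p^i + 4*n/p^i + 3*n/p^i)
      = (∑ i ∈ Ico 1 b, 10*n/p^i) + (∑ i ∈ Ico 1 b, 4*n/p^i) + (∑ i ∈ Ico 1 b, 3*n/p^i) := by
    rw [Finset.sum_add_distrib, Finset.sum_add_distrib]
  have hsumR : ∑ i ∈ Ico 1 b, (15*n/p^i + 2*n/p^i)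
      = (∑ i ∈ Ico 1 b, 15*n/p^i) + (∑ i ∈ Ico 1 b, 2*n/p^i) := by
    rw [Finset.sum_add_distrib]
  set k1 := padicValNat p (10*n+1) with hk1def
  set k3 := padicValNat p (10*n+3) with hk3def
  have hd1 : p^k1 ∣ 10*n+1 := pow_padicValNat_dvd
  have hd3 : p^k3 ∣ 10*n+3 := pow_padicValNat_dvd
  have hk1b : k1 < b := by
    have h1 : p^k1 ≤ 10*n+1 := Nat.le_of_dvd (by omega) hd1
    have h2 : k1 ≤ Nat.log p (10*n+1) := (Nat.le_log_iff_pow_le hp.one_lt (by omega)).mpr h1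
    have h3 : Nat.log p (10*n+1) ≤ Nat.log p (15*n) := Nat.log_mono_right (by omega)
    omega
  have hk3b : k3 < b := by
    have h1 : p^k3 ≤ 10*n+3 := Nat.le_of_dvd (by omega) hd3
    have h2 : k3 ≤ Nat.log p (10*n+3) := (Nat.le_log_iff_pow_le hp.one_lt (by omega)).mpr h1
    have h3 : Nat.log p (10*n+3) ≤ Nat.log p (15*n) := Nat.log_mono_right (by omega)
    omega
  by_cases hp5 : p = 5
  · subst hp5
    have hv5 : padicValNat 5 5 = 1 := padicValNat.self (by norm_num)
    have hv21 : padicValNat 5 21 = 0 := padicValNat.eq_zero_of_not_dvd (by decide)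
    have hk1 : k1 = 0 := by
      rw [hk1def]
      apply padicValNat.eq_zero_of_not_dvd
      intro h
      obtain ⟨c, hc⟩ := h
      omega
    have hk3 : k3 = 0 := by
      rw [hk3def]
      apply padicValNat.eq_zero_of_not_dvd
      intro h
      obtain ⟨c, hc⟩ := h
      omega
    have hb15 : 15*n < 5^b := Nat.lt_pow_succ_log_self (by norm_num) (15*n)
    have := lemB n b hn hb15
    rw [hsumL, hsumR] at this
    omega
  · have hv5 : padicValNat p 5 = 0 := by
      apply padicValNat.eq_zero_of_not_dvd
      intro h
      exact hp5 ((Nat.prime_dvd_prime_iff_eq hp (by norm_num)).mp h)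
    by_cases hd31 : p ∣ 10*n+1
    · have hpne2 : p ≠ 2 := by
        rintro rfl
        obtain ⟨c, hc⟩ := hd31
        omega
      have hk3 : k3 = 0 := by
        rw [hk3def]
        apply padicValNat.eq_zero_of_not_dvd
        intro h
        have h2 : p ∣ 2 := by
          have := Nat.dvd_sub h hd31
          simpa using this
        exact hpne2 ((Nat.prime_dvd_prime_iff_eq hp (by norm_num)).mp h2)
      have := S1 n p b k1 hp.two_le hk1b hd1
      rw [hsumL, hsumR] at this
      omega
    · have hk1 : k1 = 0 := by
        rw [hk1def]
        exact padicValNat.eq_zero_of_not_dvd hd31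
      by_cases hd33 : p ∣ 10*n+3
      · have hpne2 : p ≠ 2 := by
          rintro rfl
          obtain ⟨c, hc⟩ := hd33
          omega
        by_cases hp37 : p = 3 ∨ p = 7
        · have hv21 : padicValNat p 21 = 1 := by
            rcases hp37 with rfl | rfl
            · rw [show (21:ℕ) = 3*7 from rfl,
                padicValNat.mul (by norm_num) (by norm_num),
                padicValNat.self (by norm_num),
                padicValNat.eq_zero_of_not_dvd (by decide)]
            · rw [show (21:ℕ) = 3*7 from rfl,
                padicValNat.mul (by norm_num) (by norm_num),
                padicValNat.eq_zero_of_not_dvd (by decide),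
                padicValNat.self (by norm_num)]
          have hp3 : 3 ≤ p := by
            rcases hp37 with rfl | rfl <;> omega
          have := S3b n p b k3 hp3 hk3b hd3
          rw [hsumL, hsumR] at this
          omega
        · push_neg at hp37
          have hp9 : 9 ≤ p := by
            rcases Nat.lt_or_ge p 9 with h | h
            · exfalso
              have h2 := hp.two_le
              interval_cases p
              · exact hpne2 rfl
              · exact hp37.1 rfl
              · exact absurd hp (by decide)
              · exact hp5 rfl
              · exact absurd hp (by decide)
              · exact hp37.2 rfl
              · exact absurd hp (by decide)
            · exact h
          have := S3a n p b k3 hp9 hk3b hd3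
          rw [hsumL, hsumR] at this
          omega
      · have hk3 : k3 = 0 := by
          rw [hk3def]
          exact padicValNat.eq_zero_of_not_dvd hd33
        have := S0 n p b
        rw [hsumL, hsumR] at this
        omega


theorem sun_conjecture_1_3 (n : ℕ) (hn : 0 < n) :
    (10 * n + 1) * (10 * n + 3) * Nat.choose (3 * n) n ∣
      21 * (Nat.choose (15 * n) (5 * n) * Nat.choose (5 * n - 1) (n - 1)) := by
  obtain ⟨m, rfl⟩ : ∃ m, n = m + 1 := ⟨n - 1, by omega⟩
  rw [show 5 * (m+1) - 1 = 5*m+4 from by omega, show m + 1 - 1 = m from by omega]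
  have hT := keyT (m+1) (by omega)
  have I1 : Nat.choose (3*(m+1)) (m+1) * (m+1)! * (2*(m+1))! = (3*(m+1))! := by
    have h := Nat.choose_mul_factorial_mul_factorial (show m+1 ≤ 3*(m+1) by omega)
    rwa [show 3*(m+1) - (m+1) = 2*(m+1) from by omega] at h
  have I2 : Nat.choose (15*(m+1)) (5*(m+1)) * (5*(m+1))! * (10*(m+1))! = (15*(m+1))! := by
    have h := Nat.choose_mul_factorial_mul_factorial (show 5*(m+1) ≤ 15*(m+1) by omega)
    rwa [show 15*(m+1) - 5*(m+1) = 10*(m+1) from by omega] at h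
  have I3 : Nat.choose (5*m+4) m * m ! * (4*(m+1))! = (5*m+4)! := by
    have h := Nat.choose_mul_factorial_mul_factorial (show m ≤ 5*m+4 by omega)
    rwa [show 5*m+4 - m = 4*(m+1) from by omega] at h
  have I4 : (5*(m+1))! = (5*(m+1)) * (5*m+4)! := by
    rw [show 5*(m+1) = (5*m+4) + 1 from by omega, Nat.factorial_succ]
  have I5 : (m+1)! = (m+1) * m ! := Nat.factorial_succ m
  set c := (m+1)! * ((2*(m+1))! * ((5*(m+1))! * ((10*(m+1))! * (m ! * (4*(m+1))!)))) with hcdef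
  set d := (m+1) * ((5*m+4)! * m !) with hddef
  have e1 : ((10*(m+1)+1) * (10*(m+1)+3) * Nat.choose (3*(m+1)) (m+1)) * c
      = (5 * ((10*(m+1)+1) * ((10*(m+1)+3) * ((3*(m+1))! * ((10*(m+1))! * (4*(m+1))!))))) * d := by
    calc ((10*(m+1)+1) * (10*(m+1)+3) * Nat.choose (3*(m+1)) (m+1)) * c
        = (Nat.choose (3*(m+1)) (m+1) * (m+1)! * (2*(m+1))!)
          * ((10*(m+1)+1) * ((10*(m+1)+3) * ((5*(m+1))! * ((10*(m+1))! * (m ! * (4*(m+1))!))))) := by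
          rw [hcdef]; ring
      _ = (3*(m+1))!
          * ((10*(m+1)+1) * ((10*(m+1)+3) * ((5*(m+1))! * ((10*(m+1))! * (m ! * (4*(m+1))!))))) := by
          rw [I1]
      _ = (3*(m+1))!
          * ((10*(m+1)+1) * ((10*(m+1)+3) * (((5*(m+1)) * (5*m+4)!) * ((10*(m+1))! * (m ! * (4*(m+1))!))))) := by
          rw [← I4]
      _ = _ := by rw [hddef]; ring
  have e2 : (21 * (Nat.choose (15*(m+1)) (5*(m+1)) * Nat.choose (5*m+4) m)) * c
      = (21 * ((15*(m+1))! * (2*(m+1))!)) * d := by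
    calc (21 * (Nat.choose (15*(m+1)) (5*(m+1)) * Nat.choose (5*m+4) m)) * c
        = (Nat.choose (15*(m+1)) (5*(m+1)) * (5*(m+1))! * (10*(m+1))!)
          * ((Nat.choose (5*m+4) m * m ! * (4*(m+1))!) * (21 * ((m+1)! * (2*(m+1))!))) := by
          rw [hcdef]; ring
      _ = (15*(m+1))! * ((5*m+4)! * (21 * ((m+1)! * (2*(m+1))!))) := by rw [I2, I3]
      _ = (15*(m+1))! * ((5*m+4)! * (21 * (((m+1) * m !) * (2*(m+1))!))) := by rw [I5]
      _ = _ := by rw [hddef]; ring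
  have hc : 0 < c := by
    rw [hcdef]
    exact Nat.mul_pos (Nat.factorial_pos _) (Nat.mul_pos (Nat.factorial_pos _)
      (Nat.mul_pos (Nat.factorial_pos _) (Nat.mul_pos (Nat.factorial_pos _)
        (Nat.mul_pos (Nat.factorial_pos _) (Nat.factorial_pos _)))))
  have key : ((10*(m+1)+1) * (10*(m+1)+3) * Nat.choose (3*(m+1)) (m+1)) * c
      ∣ (21 * (Nat.choose (15*(m+1)) (5*(m+1)) * Nat.choose (5*m+4) m)) * c := by
    rw [e1, e2]
    exact mul_dvd_mul_right hT d
  exact (Nat.mul_dvd_mul_iff_right hc).mp key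
end

section
/- For every positive integer n, the number 2(2n+1)(2n+5)·C(2n,n) divides 105·C(6n,3n)·C(3n,n); equivalently, 105·S_n ≡ 0 (mod 2n+5), where S_n = C(6n,3n)·C(3n,n)/(2(2n+1)·C(2n,n)). -/
open Finset Nat

/-- Core floor inequality: for `r < q`,
`⌊3r/q⌋ + 2⌊2r/q⌋ ≤ ⌊6r/q⌋ + ⌊r/q⌋`. -/
private lemma coreA (q r : ℕ) (hq : 0 < q) (hr : r < q) :
    3 * r / q + 2 * (2 * r / q) ≤ 6 * r / q + r / q := by
  have h2 := Nat.div_add_mod (2 * r) q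
  have h3 := Nat.div_add_mod (3 * r) q
  have h6 := Nat.div_add_mod (6 * r) q
  have m2 := Nat.mod_lt (2 * r) hq
  have m3 := Nat.mod_lt (3 * r) hq
  have m6 := Nat.mod_lt (6 * r) hq
  have hr0 : r / q = 0 := Nat.div_eq_of_lt hr
  have b2 : 2 * r / q < 2 := Nat.div_lt_of_lt_mul (by omega)
  have b3 : 3 * r / q < 3 := Nat.div_lt_of_lt_mul (by omega)
  have b6 : 6 * r / q < 6 := Nat.div_lt_of_lt_mul (by omega)
  set a2 := 2 * r / q with ha2
  set a3 := 3 * r / q with ha3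
  set a6 := 6 * r / q with ha6
  interval_cases a2 <;> interval_cases a3 <;> interval_cases a6 <;> omega

private lemma coreB (q r : ℕ) (heq : 2 * r + 1 = q) (h3q : 3 ≤ q) :
    3 * r / q + 2 * (2 * r / q) + 1 ≤ 6 * r / q + r / q := by
  have hq : 0 < q := by omega
  have hr : r < q := by omega
  have h2 := Nat.div_add_mod (2 * r) q
  have h3 := Nat.div_add_mod (3 * r) q
  have h6 := Nat.div_add_mod (6 * r) q
  have m2 := Nat.mod_lt (2 * r) hq
  have m3 := Nat.mod_lt (3 * r) hq
  have m6 := Nat.mod_lt (6 * r) hq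
  have hr0 : r / q = 0 := Nat.div_eq_of_lt hr
  have b2 : 2 * r / q < 2 := Nat.div_lt_of_lt_mul (by omega)
  have b3 : 3 * r / q < 3 := Nat.div_lt_of_lt_mul (by omega)
  have b6 : 6 * r / q < 6 := Nat.div_lt_of_lt_mul (by omega)
  set a2 := 2 * r / q with ha2
  set a3 := 3 * r / q with ha3
  set a6 := 6 * r / q with ha6
  interval_cases a2 <;> interval_cases a3 <;> interval_cases a6 <;> omega

private lemma coreC (q r : ℕ) (heq : 2 * r + 5 = q) (h9q : 9 ≤ q) :
    3 * r / q + 2 * (2 * r / q) + 1 ≤ 6 * r / q + r / q := by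
  have hq : 0 < q := by omega
  have hr : r < q := by omega
  have h2 := Nat.div_add_mod (2 * r) q
  have h3 := Nat.div_add_mod (3 * r) q
  have h6 := Nat.div_add_mod (6 * r) q
  have m2 := Nat.mod_lt (2 * r) hq
  have m3 := Nat.mod_lt (3 * r) hq
  have m6 := Nat.mod_lt (6 * r) hq
  have hr0 : r / q = 0 := Nat.div_eq_of_lt hr
  have b2 : 2 * r / q < 2 := Nat.div_lt_of_lt_mul (by omega)
  have b3 : 3 * r / q < 3 := Nat.div_lt_of_lt_mul (by omega)
  have b6 : 6 * r / q < 6 := Nat.div_lt_of_lt_mul (by omega)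
  set a2 := 2 * r / q with ha2
  set a3 := 3 * r / q with ha3
  set a6 := 6 * r / q with ha6
  interval_cases a2 <;> interval_cases a3 <;> interval_cases a6 <;> omega

private lemma coreD (q r : ℕ) (hq : 0 < q)
    (hcase : (q ≤ 6 * r ∧ 2 * r < q) ∨ (5 * q ≤ 6 * r ∧ r < q)) :
    3 * r / q + 2 * (2 * r / q) + 1 ≤ 6 * r / q + r / q := by
  have hr : r < q := by omega
  have h2 := Nat.div_add_mod (2 * r) q
  have h3 := Nat.div_add_mod (3 * r) q
  have h6 := Nat.div_add_mod (6 * r) q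
  have m2 := Nat.mod_lt (2 * r) hq
  have m3 := Nat.mod_lt (3 * r) hq
  have m6 := Nat.mod_lt (6 * r) hq
  have hr0 : r / q = 0 := Nat.div_eq_of_lt hr
  have b2 : 2 * r / q < 2 := Nat.div_lt_of_lt_mul (by omega)
  have b3 : 3 * r / q < 3 := Nat.div_lt_of_lt_mul (by omega)
  have b6 : 6 * r / q < 6 := Nat.div_lt_of_lt_mul (by omega)
  set a2 := 2 * r / q with ha2
  set a3 := 3 * r / q with ha3
  set a6 := 6 * r / q with ha6
  interval_cases a2 <;> interval_cases a3 <;> interval_cases a6 <;> omega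

private lemma split3 (q a r k : ℕ) (hq : 0 < q) :
    k * (q * a + r) / q = k * a + k * r / q := by
  rw [show k * (q * a + r) = k * r + q * (k * a) by ring,
    Nat.add_mul_div_left _ _ hq, Nat.add_comm]

private lemma splitn (q a r : ℕ) (hq : 0 < q) :
    (q * a + r) / q = a + r / q := by
  rw [show q * a + r = r + q * a by ring, Nat.add_mul_div_left _ _ hq, Nat.add_comm]

private lemma LA (q n : ℕ) (hq : 0 < q) :
    3 * n / q + 2 * (2 * n / q) ≤ 6 * n / q + n / q := by
  obtain ⟨a, r, hr, rfl⟩ : ∃ a r, r < q ∧ n = q * a + r :=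
    ⟨n / q, n % q, Nat.mod_lt _ hq, (Nat.div_add_mod n q).symm⟩
  rw [split3 q a r 3 hq, split3 q a r 2 hq, split3 q a r 6 hq, splitn q a r hq]
  have := coreA q r hq hr
  omega

private lemma LB (q n : ℕ) (h3q : 3 ≤ q) (hdvd : q ∣ 2 * n + 1) :
    3 * n / q + 2 * (2 * n / q) + 1 ≤ 6 * n / q + n / q := by
  have hq : 0 < q := by omega
  obtain ⟨a, r, hr, rfl⟩ : ∃ a r, r < q ∧ n = q * a + r :=
    ⟨n / q, n % q, Nat.mod_lt _ hq, (Nat.div_add_mod n q).symm⟩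
  have hd2 : q ∣ 2 * r + 1 := by
    have h' : q ∣ q * (2 * a) + (2 * r + 1) := by
      have : 2 * (q * a + r) + 1 = q * (2 * a) + (2 * r + 1) := by ring
      rwa [this] at hdvd
    exact (Nat.dvd_add_right (Dvd.intro _ rfl)).mp h'
  obtain ⟨k, hk⟩ := hd2
  have heq : 2 * r + 1 = q := by
    rcases k with _ | _ | k
    · omega
    · omega
    · exfalso
      have h' : q * 2 ≤ q * (k + 1 + 1) := Nat.mul_le_mul_left q (by omega)
      rw [← hk] at h'
      omega
  rw [split3 q a r 3 hq, split3 q a r 2 hq, split3 q a r 6 hq, splitn q a r hq]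
  have := coreB q r heq h3q
  omega

private lemma LC (q n : ℕ) (h9q : 9 ≤ q) (hdvd : q ∣ 2 * n + 5) :
    3 * n / q + 2 * (2 * n / q) + 1 ≤ 6 * n / q + n / q := by
  have hq : 0 < q := by omega
  obtain ⟨a, r, hr, rfl⟩ : ∃ a r, r < q ∧ n = q * a + r :=
    ⟨n / q, n % q, Nat.mod_lt _ hq, (Nat.div_add_mod n q).symm⟩
  have hd2 : q ∣ 2 * r + 5 := by
    have h' : q ∣ q * (2 * a) + (2 * r + 5) := by
      have : 2 * (q * a + r) + 5 = q * (2 * a) + (2 * r + 5) := by ring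
      rwa [this] at hdvd
    exact (Nat.dvd_add_right (Dvd.intro _ rfl)).mp h'
  obtain ⟨k, hk⟩ := hd2
  have heq : 2 * r + 5 = q := by
    rcases k with _ | _ | _ | k
    · omega
    · omega
    · omega
    · exfalso
      have h' : q * 3 ≤ q * (k + 1 + 1 + 1) := Nat.mul_le_mul_left q (by omega)
      rw [← hk] at h'
      omega
  rw [split3 q a r 3 hq, split3 q a r 2 hq, split3 q a r 6 hq, splitn q a r hq]
  have := coreC q r heq h9q
  omega

private lemma LD (n : ℕ) (hn : 0 < n) :
    ∃ i, 1 ≤ i ∧ 2 ^ i ≤ 6 * n ∧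
      3 * n / 2 ^ i + 2 * (2 * n / 2 ^ i) + 1 ≤ 6 * n / 2 ^ i + n / 2 ^ i := by
  set k := Nat.log 2 n + 1 with hk
  have hk1 : 2 ^ (k - 1) ≤ n := Nat.pow_log_le_self 2 hn.ne'
  have hk2 : n < 2 ^ k := Nat.lt_pow_succ_log_self (by norm_num) n
  have e1 : 2 ^ k = 2 * 2 ^ (k - 1) := by
    rw [← pow_succ']
    congr 1
  by_cases hc : 5 * 2 ^ k ≤ 6 * n
  · exact ⟨k, by omega, by omega, coreD (2 ^ k) n (by positivity) (Or.inr ⟨hc, hk2⟩)⟩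
  · have e2 : 2 ^ (k + 1) = 2 * 2 ^ k := by rw [pow_succ]; ring
    exact ⟨k + 1, by omega, by omega,
      coreD (2 ^ (k + 1)) n (by positivity) (Or.inl ⟨by omega, by omega⟩)⟩

private lemma sum_gain {L R : ℕ → ℕ} {b s t : ℕ} (h1 : 1 ≤ s) (hst : s ≤ t + 1)
    (htb : t + 1 ≤ b) (hmid : ∀ i, s ≤ i → i ≤ t → L i + 1 ≤ R i)
    (hall : ∀ i, L i ≤ R i) :
    (∑ i ∈ Ico 1 b, L i) + (t + 1 - s) ≤ ∑ i ∈ Ico 1 b, R i := by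
  have e : ∀ f : ℕ → ℕ, ∑ i ∈ Ico 1 b, f i =
      ∑ i ∈ Ico 1 s, f i + (∑ i ∈ Ico s (t + 1), f i + ∑ i ∈ Ico (t + 1) b, f i) := by
    intro f
    rw [Finset.sum_Ico_consecutive _ hst htb, Finset.sum_Ico_consecutive _ h1 (hst.trans htb)]
  rw [e L, e R]
  have g1 : ∑ i ∈ Ico 1 s, L i ≤ ∑ i ∈ Ico 1 s, R i :=
    Finset.sum_le_sum fun i _ => hall i
  have g3 : ∑ i ∈ Ico (t + 1) b, L i ≤ ∑ i ∈ Ico (t + 1) b, R i :=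
    Finset.sum_le_sum fun i _ => hall i
  have g2 : (∑ i ∈ Ico s (t + 1), L i) + (t + 1 - s) ≤ ∑ i ∈ Ico s (t + 1), R i := by
    calc (∑ i ∈ Ico s (t + 1), L i) + (t + 1 - s)
        = ∑ i ∈ Ico s (t + 1), (L i + 1) := by
          rw [Finset.sum_add_distrib, Finset.sum_const, Nat.card_Ico, smul_eq_mul, mul_one]
      _ ≤ ∑ i ∈ Ico s (t + 1), R i := by
          refine Finset.sum_le_sum fun i hi => ?_
          rw [Finset.mem_Ico] at hi
          exact hmid i hi.1 (by omega)
  omega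

private lemma key_ineq (p n : ℕ) (hp : p.Prime) (hn : 0 < n) :
    padicValNat p 2 + padicValNat p (2 * n + 1) + padicValNat p (2 * n + 5) +
      ∑ i ∈ Ico 1 (6 * n + 1), (3 * n / p ^ i + 2 * (2 * n / p ^ i))
    ≤ padicValNat p 105 + ∑ i ∈ Ico 1 (6 * n + 1), (6 * n / p ^ i + n / p ^ i) := by
  haveI : Fact p.Prime := ⟨hp⟩
  have hall : ∀ i, 3 * n / p ^ i + 2 * (2 * n / p ^ i) ≤ 6 * n / p ^ i + n / p ^ i :=
    fun i => LA _ _ (pow_pos hp.pos i)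
  by_cases hp2 : p = 2
  · subst hp2
    have h1 : padicValNat 2 (2 * n + 1) = 0 := padicValNat.eq_zero_of_not_dvd (by omega)
    have h5 : padicValNat 2 (2 * n + 5) = 0 := padicValNat.eq_zero_of_not_dvd (by omega)
    have h2 : padicValNat 2 2 = 1 := padicValNat.self one_lt_two
    obtain ⟨i0, hi1, hi6, hineq⟩ := LD n hn
    have hi0b : i0 + 1 ≤ 6 * n + 1 := by
      have := Nat.lt_two_pow_self (n := i0)
      omega
    have hg : (∑ i ∈ Ico 1 (6 * n + 1), (3 * n / 2 ^ i + 2 * (2 * n / 2 ^ i))) + (i0 + 1 - i0) ≤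
        ∑ i ∈ Ico 1 (6 * n + 1), (6 * n / 2 ^ i + n / 2 ^ i) :=
      sum_gain hi1 (by omega) hi0b
        (fun i hsi hit => by
          have hii : i = i0 := le_antisymm hit hsi
          subst hii
          exact hineq)
        hall
    omega
  · have hp2' : 2 ≤ p := hp.two_le
    have hp3 : 3 ≤ p := by omega
    have hodd : p % 2 = 1 := by
      rcases Nat.mod_two_eq_zero_or_one p with h | h
      · exfalso
        have : (2 : ℕ) ∣ p := by omega
        exact hp2 ((Nat.prime_dvd_prime_iff_eq Nat.prime_two hp).mp this).symm
      · exact h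
    have hv2 : padicValNat p 2 = 0 :=
      padicValNat.eq_zero_of_not_dvd (fun h => by
        have := Nat.le_of_dvd (by norm_num) h
        omega)
    set a1 := padicValNat p (2 * n + 1) with ha1
    set a5 := padicValNat p (2 * n + 5) with ha5
    have hd1 : p ^ a1 ∣ 2 * n + 1 := pow_padicValNat_dvd
    have hd5 : p ^ a5 ∣ 2 * n + 5 := pow_padicValNat_dvd
    rw [hv2]
    rcases Nat.eq_zero_or_pos a1 with h10 | h1pos
    · rcases Nat.eq_zero_or_pos a5 with h50 | h5pos
      · have hg : (∑ i ∈ Ico 1 (6 * n + 1), (3 * n / p ^ i + 2 * (2 * n / p ^ i))) ≤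
            ∑ i ∈ Ico 1 (6 * n + 1), (6 * n / p ^ i + n / p ^ i) :=
          Finset.sum_le_sum (fun i _ => hall i)
        omega
      · have hpd5 : p ∣ 2 * n + 5 := dvd_trans (dvd_pow_self p h5pos.ne') hd5
        have hub : p ^ a5 ≤ 2 * n + 5 := Nat.le_of_dvd (by omega) hd5
        have ha5b : a5 + 1 ≤ 6 * n + 1 := by
          have := Nat.lt_pow_self (n := a5) hp.one_lt
          omega
        by_cases hsmall : p ≤ 7
        · have hpd105 : p ∣ 105 := by
            interval_cases p
            · norm_num
            · exact absurd hp (by norm_num)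
            · norm_num
            · exact absurd hp (by norm_num)
            · norm_num
          have hc : 1 ≤ padicValNat p 105 :=
            one_le_padicValNat_of_dvd (by norm_num) hpd105
          have hg : (∑ i ∈ Ico 1 (6 * n + 1), (3 * n / p ^ i + 2 * (2 * n / p ^ i))) +
              (a5 + 1 - 2) ≤ ∑ i ∈ Ico 1 (6 * n + 1), (6 * n / p ^ i + n / p ^ i) :=
            sum_gain (by omega) (by omega) ha5b
            (fun i h2i hia => by
              have h9 : 9 ≤ p ^ i := by
                calc (9 : ℕ) = 3 ^ 2 := by norm_num
                  _ ≤ p ^ 2 := Nat.pow_le_pow_left hp3 2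
                  _ ≤ p ^ i := Nat.pow_le_pow_right hp.pos h2i
              exact LC (p ^ i) n h9 ((pow_dvd_pow p hia).trans hd5))
            hall
          omega
        · have hp9 : 9 ≤ p := by omega
          have hg : (∑ i ∈ Ico 1 (6 * n + 1), (3 * n / p ^ i + 2 * (2 * n / p ^ i))) +
              (a5 + 1 - 1) ≤ ∑ i ∈ Ico 1 (6 * n + 1), (6 * n / p ^ i + n / p ^ i) :=
            sum_gain le_rfl (by omega) ha5b
            (fun i h1i hia => by
              have h9 : 9 ≤ p ^ i := le_trans hp9 (Nat.le_self_pow (by omega) p)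
              exact LC (p ^ i) n h9 ((pow_dvd_pow p hia).trans hd5))
            hall
          omega
    · have hpd1 : p ∣ 2 * n + 1 := dvd_trans (dvd_pow_self p h1pos.ne') hd1
      have h50 : a5 = 0 := by
        by_contra h
        have hpd5 : p ∣ 2 * n + 5 :=
          dvd_trans (dvd_pow_self p h) hd5
        have h4 : p ∣ 4 := by
          have := Nat.dvd_sub hpd5 hpd1
          rwa [show 2 * n + 5 - (2 * n + 1) = 4 by omega] at this
        have hle4 : p ≤ 4 := Nat.le_of_dvd (by norm_num) h4
        interval_cases p
        · omega
        · exact absurd hp (by norm_num)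
      have hub : p ^ a1 ≤ 2 * n + 1 := Nat.le_of_dvd (by omega) hd1
      have ha1b : a1 + 1 ≤ 6 * n + 1 := by
        have := Nat.lt_pow_self (n := a1) hp.one_lt
        omega
      have hg : (∑ i ∈ Ico 1 (6 * n + 1), (3 * n / p ^ i + 2 * (2 * n / p ^ i))) +
          (a1 + 1 - 1) ≤ ∑ i ∈ Ico 1 (6 * n + 1), (6 * n / p ^ i + n / p ^ i) :=
        sum_gain le_rfl (by omega) ha1b
        (fun i h1i hia => by
          have h3q : 3 ≤ p ^ i := le_trans hp3 (Nat.le_self_pow (by omega) p)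
          exact LB (p ^ i) n h3q ((pow_dvd_pow p hia).trans hd1))
        hall
      omega

theorem S_n_mod_2n_add_5 (n : ℕ) (hn : 0 < n) :
    2 * (2 * n + 1) * (2 * n + 5) * Nat.choose (2 * n) n ∣
      105 * (Nat.choose (6 * n) (3 * n) * Nat.choose (3 * n) n) := by
  have e1 := Nat.choose_mul_factorial_mul_factorial (show n ≤ 2 * n by omega)
  rw [show 2 * n - n = n by omega] at e1
  have e2 := Nat.choose_mul_factorial_mul_factorial (show n ≤ 3 * n by omega)
  rw [show 3 * n - n = 2 * n by omega] at e2
  have e3 := Nat.choose_mul_factorial_mul_factorial (show 3 * n ≤ 6 * n by omega)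
  rw [show 6 * n - 3 * n = 3 * n by omega] at e3
  have hstar : 2 * (2 * n + 1) * (2 * n + 5) * ((3 * n)! * ((2 * n)! * ((2 * n)! * n !))) ∣
      105 * ((6 * n)! * (n ! * n !)) := by
    have hA : 2 * (2 * n + 1) * (2 * n + 5) * ((3 * n)! * ((2 * n)! * ((2 * n)! * n !))) ≠ 0 := by
      positivity
    have hB : 105 * ((6 * n)! * (n ! * n !)) ≠ 0 := by positivity
    rw [← Nat.factorization_le_iff_dvd hA hB, Finsupp.le_def]
    intro p
    by_cases hp : p.Prime
    · haveI : Fact p.Prime := ⟨hp⟩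
      have hm : ∀ a b : ℕ, a ≠ 0 → b ≠ 0 →
          padicValNat p (a * b) = padicValNat p a + padicValNat p b :=
        fun a b ha hb => padicValNat.mul ha hb
      have hfact : ∀ m : ℕ, m ≤ 6 * n →
          padicValNat p (m !) = ∑ i ∈ Ico 1 (6 * n + 1), m / p ^ i := by
        intro m hm'
        exact padicValNat_factorial (by have := Nat.log_le_self p m; omega)
      rw [Nat.factorization_def _ hp, Nat.factorization_def _ hp]
      rw [hm _ _ (by positivity) (by positivity), hm _ _ (by positivity) (by positivity),
        hm _ _ (by positivity) (by positivity), hm _ _ (by positivity) (by positivity),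
        hm _ _ (by positivity) (by positivity), hm _ _ (by positivity) (by positivity),
        hm _ _ (by positivity) (by positivity), hm _ _ (by positivity) (by positivity),
        hm _ _ (by positivity) (by positivity)]
      rw [hfact (3 * n) (by omega), hfact (2 * n) (by omega), hfact n (by omega),
        hfact (6 * n) (by omega)]
      have hk := key_ineq p n hp hn
      have hs1 : ∑ i ∈ Ico 1 (6 * n + 1), (3 * n / p ^ i + 2 * (2 * n / p ^ i)) =
          (∑ i ∈ Ico 1 (6 * n + 1), 3 * n / p ^ i) +
            2 * ∑ i ∈ Ico 1 (6 * n + 1), 2 * n / p ^ i := by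
        rw [Finset.sum_add_distrib, Finset.mul_sum]
      have hs2 : ∑ i ∈ Ico 1 (6 * n + 1), (6 * n / p ^ i + n / p ^ i) =
          (∑ i ∈ Ico 1 (6 * n + 1), 6 * n / p ^ i) +
            ∑ i ∈ Ico 1 (6 * n + 1), n / p ^ i := by
        rw [Finset.sum_add_distrib]
      omega
    · simp [Nat.factorization_eq_zero_of_not_prime _ hp]
  have hM : ((3 * n)! * ((2 * n)! * (n ! * (n ! * n !)))) ≠ 0 := by positivity
  have E1 : 2 * (2 * n + 1) * (2 * n + 5) * Nat.choose (2 * n) n *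
      ((3 * n)! * ((2 * n)! * (n ! * (n ! * n !)))) =
      2 * (2 * n + 1) * (2 * n + 5) * ((3 * n)! * ((2 * n)! * ((2 * n)! * n !))) := by
    calc 2 * (2 * n + 1) * (2 * n + 5) * Nat.choose (2 * n) n *
        ((3 * n)! * ((2 * n)! * (n ! * (n ! * n !))))
        = 2 * (2 * n + 1) * (2 * n + 5) *
          ((3 * n)! * ((2 * n)! * ((Nat.choose (2 * n) n * n ! * n !) * n !))) := by ring
      _ = 2 * (2 * n + 1) * (2 * n + 5) * ((3 * n)! * ((2 * n)! * ((2 * n)! * n !))) := by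
          rw [e1]
  have E2 : 105 * (Nat.choose (6 * n) (3 * n) * Nat.choose (3 * n) n) *
      ((3 * n)! * ((2 * n)! * (n ! * (n ! * n !)))) = 105 * ((6 * n)! * (n ! * n !)) := by
    calc 105 * (Nat.choose (6 * n) (3 * n) * Nat.choose (3 * n) n) *
        ((3 * n)! * ((2 * n)! * (n ! * (n ! * n !))))
        = 105 * ((Nat.choose (6 * n) (3 * n) * (3 * n)! *
            (Nat.choose (3 * n) n * n ! * (2 * n)!)) * (n ! * n !)) := by ring
      _ = 105 * ((Nat.choose (6 * n) (3 * n) * (3 * n)! * (3 * n)!) * (n ! * n !)) := by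
          rw [e2]
      _ = 105 * ((6 * n)! * (n ! * n !)) := by rw [e3]
  refine (mul_dvd_mul_iff_right hM).mp ?_
  rw [E1, E2]
  exact hstar
end

section
/- For every positive integer n, the number 2(2n+1)(2n+7)·C(2n,n) divides 315·C(6n,3n)·C(3n,n); equivalently, 315·S_n ≡ 0 (mod 2n+7), where S_n = C(6n,3n)·C(3n,n)/(2(2n+1)·C(2n,n)). -/
open Finset

section helpers
private lemma fact_choose {p n k b : ℕ} (hp : p.Prime) (hkn : k ≤ n)
    (hb : Nat.log p n < b) :
    (Nat.choose n k).factorization p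
      = ((Finset.Ico 1 b).filter fun i => p ^ i ≤ k % p ^ i + (n - k) % p ^ i).card := by
  have hpos := Nat.choose_pos hkn
  have hfin : FiniteMultiplicity p (Nat.choose n k) :=
    Nat.finiteMultiplicity_iff.2 ⟨hp.ne_one, hpos⟩
  have h1 : ((multiplicity p (Nat.choose n k) : ℕ) : ℕ∞)
      = emultiplicity p (Nat.choose n k) := hfin.emultiplicity_eq_multiplicity.symm
  rw [hp.emultiplicity_choose hkn hb] at h1
  rw [Nat.factorization_def _ hp, @padicValNat_def _ ⟨hp⟩ _ hpos.ne']
  exact_mod_cast h1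

private lemma fact_dvd_card {p m b : ℕ} (hp : p.Prime) (hm : 0 < m) (hmb : m ≤ b) :
    m.factorization p = ((Finset.Ico 1 b).filter fun i => p ^ i ∣ m).card := by
  rw [Nat.factorization_eq_card_pow_dvd m hp]
  congr 1
  ext i
  simp only [Finset.mem_filter, Finset.mem_Ico]
  constructor
  · rintro ⟨⟨h1, h2⟩, h3⟩
    exact ⟨⟨h1, lt_of_lt_of_le h2 hmb⟩, h3⟩
  · rintro ⟨⟨h1, h2⟩, h3⟩
    have hpi : p ^ i ≤ m := Nat.le_of_dvd hm h3
    have : i < 2 ^ i := Nat.lt_two_pow_self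
    have : 2 ^ i ≤ p ^ i := Nat.pow_le_pow_left hp.two_le i
    exact ⟨⟨h1, by omega⟩, h3⟩

private lemma mod_mul_red (a n q : ℕ) : (a * n) % q = (a * (n % q)) % q := by
  conv_lhs => rw [← Nat.mod_add_div n q]
  rw [Nat.mul_add, ← Nat.mul_assoc, Nat.mul_comm a q, Nat.mul_assoc,
    Nat.add_mul_mod_self_left]

private lemma keyL0 {q n : ℕ} (hq : 0 < q) (h0 : q ≤ n % q + n % q) :
    q ≤ (3 * n) % q + (3 * n) % q ∨ q ≤ n % q + (2 * n) % q := by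
  set x := n % q with hx
  have hxq : x < q := Nat.mod_lt _ hq
  rcases lt_or_ge (3 * x) (2 * q) with h | h
  · left
    have e3 : (3 * n) % q = 3 * x - q := by
      rw [mod_mul_red, ← hx, Nat.mod_eq_sub_mod (by omega), Nat.mod_eq_of_lt (by omega)]
    omega
  · right
    have e2 : (2 * n) % q = 2 * x - q := by
      rw [mod_mul_red, ← hx, Nat.mod_eq_sub_mod (by omega), Nat.mod_eq_of_lt (by omega)]
    omega

private lemma keyL1 {q n : ℕ} (h6 : q ≤ 6 * (n % q)) (h2 : 2 * (n % q) < q) :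
    q ≤ (3 * n) % q + (3 * n) % q ∨ q ≤ n % q + (2 * n) % q := by
  set x := n % q with hx
  rcases lt_or_ge (3 * x) q with h | h
  · left
    have e3 : (3 * n) % q = 3 * x := by rw [mod_mul_red, ← hx, Nat.mod_eq_of_lt h]
    omega
  · right
    have e2 : (2 * n) % q = 2 * x := by rw [mod_mul_red, ← hx, Nat.mod_eq_of_lt h2]
    omega

private lemma keyDv {q n c : ℕ} (hq : 0 < q) (hodd : q % 2 = 1) (hcodd : c % 2 = 1)
    (hcq : c < q) (hd : q ∣ 2 * n + c) : 2 * (n % q) + c = q := by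
  obtain ⟨m, hm⟩ := hd
  set x := n % q with hx
  set d := n / q with hdd
  have hxq : x < q := Nat.mod_lt _ hq
  have hn : q * d + x = n := Nat.div_add_mod n q
  have hb1 : 2 * d < m := by
    have h1 : q * (2 * d) < q * m := by
      have e : q * (2 * d) = 2 * (q * d) := by ring
      omega
    exact lt_of_mul_lt_mul_left h1 (Nat.zero_le q)
  have hb2 : m < 2 * d + 3 := by
    have h1 : q * m < q * (2 * d + 3) := by
      have e : q * (2 * d + 3) = 2 * (q * d) + 3 * q := by ring
      omega
    exact lt_of_mul_lt_mul_left h1 (Nat.zero_le q)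
  have : m = 2 * d + 1 ∨ m = 2 * d + 2 := by omega
  rcases this with rfl | rfl
  · have e : q * (2 * d + 1) = 2 * (q * d) + q := by ring
    omega
  · have e : q * (2 * d + 2) = 2 * (q * d) + 2 * q := by ring
    omega

private lemma levelD {q n : ℕ} (hq : 11 ≤ q) (hodd : q % 2 = 1) :
    ((if q ≤ n % q + n % q then 1 else 0)
      + (if q ∣ 2 * n + 1 then 1 else 0) + (if q ∣ 2 * n + 7 then 1 else 0) : ℕ)
    ≤ (if q ≤ (3 * n) % q + (3 * n) % q then 1 else 0)
      + (if q ≤ n % q + (2 * n) % q then 1 else 0) := by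
  have hq0 : 0 < q := by omega
  by_cases h0 : q ≤ n % q + n % q
  · have hd1 : ¬ q ∣ 2 * n + 1 := fun h => by
      have := keyDv hq0 hodd (by norm_num) (by omega) h; omega
    have hd7 : ¬ q ∣ 2 * n + 7 := fun h => by
      have := keyDv hq0 hodd (by norm_num) (by omega) h; omega
    rcases keyL0 hq0 h0 with h | h <;> simp [h0, hd1, hd7, h] <;> split <;> omega
  · by_cases hd1 : q ∣ 2 * n + 1
    · have he := keyDv hq0 hodd (by norm_num) (by omega) hd1
      have hd7 : ¬ q ∣ 2 * n + 7 := by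
        intro h7
        have h6 : q ∣ 6 := by simpa using Nat.dvd_sub h7 hd1
        have := Nat.le_of_dvd (by norm_num) h6
        omega
      rcases keyL1 (q := q) (n := n) (by omega) (by omega) with h | h <;>
        simp [h0, hd1, hd7, h] <;> split <;> omega
    · by_cases hd7 : q ∣ 2 * n + 7
      · have he := keyDv hq0 hodd (by norm_num) (by omega) hd7
        rcases keyL1 (q := q) (n := n) (by omega) (by omega) with h | h <;>
          simp [h0, hd1, hd7, h] <;> split <;> omega
      · simp [h0, hd1, hd7]

private lemma levelE {q n : ℕ} (hq : 3 ≤ q) (hodd : q % 2 = 1) :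
    ((if q ≤ n % q + n % q then 1 else 0)
      + (if q ∣ 2 * n + 1 then 1 else 0) + (if q ∣ 2 * n + 7 then 1 else 0) : ℕ)
    ≤ (if q ≤ (3 * n) % q + (3 * n) % q then 1 else 0)
      + (if q ≤ n % q + (2 * n) % q then 1 else 0) + 1 := by
  have hq0 : 0 < q := by omega
  by_cases h0 : q ≤ n % q + n % q
  · have hd1 : ¬ q ∣ 2 * n + 1 := fun h => by
      have := keyDv hq0 hodd (by norm_num) (by omega) h; omega
    rcases keyL0 hq0 h0 with h | h <;> simp [h0, hd1, h] <;> split <;> omega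
  · by_cases hd1 : q ∣ 2 * n + 1
    · have he := keyDv hq0 hodd (by norm_num) (by omega) hd1
      rcases keyL1 (q := q) (n := n) (by omega) (by omega) with h | h <;>
        simp [h0, hd1, h] <;> split <;> omega
    · simp [h0, hd1]
      split <;> split <;> split <;> omega
private lemma card_sum_le {I : Finset ℕ} (P0 P1 P7 Q1 Q2 : ℕ → Prop)
    [DecidablePred P0] [DecidablePred P1] [DecidablePred P7]
    [DecidablePred Q1] [DecidablePred Q2] (w : ℕ → ℕ)
    (H : ∀ i ∈ I, ((if P0 i then 1 else 0) + (if P1 i then 1 else 0)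
        + (if P7 i then 1 else 0) : ℕ)
      ≤ (if Q1 i then 1 else 0) + (if Q2 i then 1 else 0) + w i) :
    (I.filter P0).card + (I.filter P1).card + (I.filter P7).card
      ≤ (I.filter Q1).card + (I.filter Q2).card + ∑ i ∈ I, w i := by
  simp only [Finset.card_filter, ← Finset.sum_add_distrib]
  exact Finset.sum_le_sum H

end helpers

private lemma main_ineq {n p : ℕ} (hn : 0 < n) (hp : p.Prime) :
    (Nat.choose (2 * n) n).factorization p + (2 * n + 1).factorization p
      + (2 * n + 7).factorization p + (2 : ℕ).factorization p
    ≤ (315 : ℕ).factorization p + ((Nat.choose (6 * n) (3 * n)).factorization p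
      + (Nat.choose (3 * n) n).factorization p) := by
  set b := 6 * n + 7 with hb
  set I := Finset.Ico 1 b with hI
  have e0 : (Nat.choose (2 * n) n).factorization p
      = (I.filter fun i => p ^ i ≤ n % p ^ i + n % p ^ i).card := by
    have := fact_choose (n := 2 * n) (k := n) (b := b) hp (by omega)
      (lt_of_le_of_lt (Nat.log_le_self _ _) (by omega))
    simpa [show 2 * n - n = n by omega] using this
  have e1 : (Nat.choose (6 * n) (3 * n)).factorization p
      = (I.filter fun i => p ^ i ≤ (3 * n) % p ^ i + (3 * n) % p ^ i).card := by
    have := fact_choose (n := 6 * n) (k := 3 * n) (b := b) hp (by omega)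
      (lt_of_le_of_lt (Nat.log_le_self _ _) (by omega))
    simpa [show 6 * n - 3 * n = 3 * n by omega] using this
  have e2 : (Nat.choose (3 * n) n).factorization p
      = (I.filter fun i => p ^ i ≤ n % p ^ i + (2 * n) % p ^ i).card := by
    have := fact_choose (n := 3 * n) (k := n) (b := b) hp (by omega)
      (lt_of_le_of_lt (Nat.log_le_self _ _) (by omega))
    simpa [show 3 * n - n = 2 * n by omega] using this
  have ed1 : (2 * n + 1).factorization p
      = (I.filter fun i => p ^ i ∣ 2 * n + 1).card :=
    fact_dvd_card hp (by omega) (by omega)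
  have ed7 : (2 * n + 7).factorization p
      = (I.filter fun i => p ^ i ∣ 2 * n + 7).card :=
    fact_dvd_card hp (by omega) (by omega)
  by_cases hp2 : p = 2
  · subst hp2
    have z1 : (2 * n + 1).factorization 2 = 0 :=
      Nat.factorization_eq_zero_of_not_dvd (by omega)
    have z7 : (2 * n + 7).factorization 2 = 0 :=
      Nat.factorization_eq_zero_of_not_dvd (by omega)
    have z2 : (2 : ℕ).factorization 2 = 1 := Nat.Prime.factorization_self Nat.prime_two
    rw [e0, e1, e2, z1, z7, z2]
    have key : (I.filter fun i => 2 ^ i ≤ n % 2 ^ i + n % 2 ^ i).card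
        < (I.filter fun i => 2 ^ i ≤ (3 * n) % 2 ^ i + (3 * n) % 2 ^ i).card
          + (I.filter fun i => 2 ^ i ≤ n % 2 ^ i + (2 * n) % 2 ^ i).card := by
      rw [Finset.card_filter, Finset.card_filter, Finset.card_filter,
        ← Finset.sum_add_distrib]
      apply Finset.sum_lt_sum
      · intro i _
        rcases Classical.em (2 ^ i ≤ n % 2 ^ i + n % 2 ^ i) with h0 | h0
        · rcases keyL0 (Nat.pow_pos (n := i) (by norm_num : 0 < 2)) h0 with h | h <;>
            simp [h0, h] <;> split <;> omega
        · simp [h0]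
      · refine ⟨Nat.log 2 (2 * n) + 1, ?_, ?_⟩
        · have := Nat.log_le_self 2 (2 * n)
          simp only [hI, Finset.mem_Ico]
          omega
        · set i := Nat.log 2 (2 * n) + 1 with hi
          have hlt : 2 * n < 2 ^ i := Nat.lt_pow_succ_log_self (by norm_num) (2 * n)
          have hle : 2 ^ i ≤ 4 * n := by
            have h1 : 2 ^ Nat.log 2 (2 * n) ≤ 2 * n :=
              Nat.pow_log_le_self 2 (by omega)
            rw [hi, pow_succ]
            omega
          have hnm : n % 2 ^ i = n := Nat.mod_eq_of_lt (by omega)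
          have h0 : ¬ 2 ^ i ≤ n % 2 ^ i + n % 2 ^ i := by omega
          rcases keyL1 (q := 2 ^ i) (n := n) (by omega) (by omega) with h | h <;>
            simp [h0, h]
    omega
  · -- p odd
    have podd : p % 2 = 1 := by
      rcases hp.eq_two_or_odd' with h | h
      · exact absurd h hp2
      · obtain ⟨k, hk⟩ := h
        omega
    have qodd : ∀ i : ℕ, p ^ i % 2 = 1 := by
      intro i
      rw [Nat.pow_mod, podd]
      simp
    have z2 : (2 : ℕ).factorization p = 0 := by
      apply Nat.factorization_eq_zero_of_not_dvd
      intro h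
      exact hp2 ((Nat.prime_dvd_prime_iff_eq hp Nat.prime_two).mp h)
    have hq3 : ∀ i : ℕ, i ≠ 0 → 3 ≤ p ^ i := by
      intro i hi
      have h1 : p ≤ p ^ i := Nat.le_self_pow hi p
      have h2 := hp.two_le
      omega
    set e315 := (315 : ℕ).factorization p with he315
    have key : (I.filter fun i => p ^ i ≤ n % p ^ i + n % p ^ i).card
        + (I.filter fun i => p ^ i ∣ 2 * n + 1).card
        + (I.filter fun i => p ^ i ∣ 2 * n + 7).card
      ≤ (I.filter fun i => p ^ i ≤ (3 * n) % p ^ i + (3 * n) % p ^ i).card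
        + (I.filter fun i => p ^ i ≤ n % p ^ i + (2 * n) % p ^ i).card + e315 := by
      by_cases hp357 : p = 3 ∨ p = 5 ∨ p = 7
      · obtain ⟨w, hwE, hwsum⟩ :
            ∃ w : ℕ → ℕ, (∀ i ∈ I, w i = 0 → 11 ≤ p ^ i) ∧ (∑ i ∈ I, w i) ≤ e315 := by
          rcases hp357 with rfl | rfl | rfl
          · refine ⟨fun i => if i ≤ 2 then 1 else 0, ?_, ?_⟩
            · intro i _ hwi
              have h3 : 3 ≤ i := by by_contra h; simp [show i ≤ 2 by omega] at hwi
              calc (11 : ℕ) ≤ 3 ^ 3 := by norm_num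
                _ ≤ 3 ^ i := Nat.pow_le_pow_right (by norm_num) h3
            · have h9 : (3 : ℕ) ^ 2 ∣ 315 := by norm_num
              have hle : 2 ≤ e315 :=
                (Nat.Prime.pow_dvd_iff_le_factorization hp (by norm_num)).mp h9
              calc ∑ i ∈ I, (if i ≤ 2 then 1 else 0)
                  = (I.filter fun i => i ≤ 2).card := (Finset.card_filter _ _).symm
                _ ≤ (Finset.Ico 1 3).card := by
                    apply Finset.card_le_card
                    intro i hi
                    simp only [hI, Finset.mem_filter, Finset.mem_Ico] at hi ⊢
                    omega
                _ ≤ 2 := by simp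
                _ ≤ e315 := hle
          · refine ⟨fun i => if i ≤ 1 then 1 else 0, ?_, ?_⟩
            · intro i _ hwi
              have h2 : 2 ≤ i := by by_contra h; simp [show i ≤ 1 by omega] at hwi
              calc (11 : ℕ) ≤ 5 ^ 2 := by norm_num
                _ ≤ 5 ^ i := Nat.pow_le_pow_right (by norm_num) h2
            · have h5 : (5 : ℕ) ^ 1 ∣ 315 := by norm_num
              have hle : 1 ≤ e315 :=
                (Nat.Prime.pow_dvd_iff_le_factorization hp (by norm_num)).mp h5
              calc ∑ i ∈ I, (if i ≤ 1 then 1 else 0)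
                  = (I.filter fun i => i ≤ 1).card := (Finset.card_filter _ _).symm
                _ ≤ (Finset.Ico 1 2).card := by
                    apply Finset.card_le_card
                    intro i hi
                    simp only [hI, Finset.mem_filter, Finset.mem_Ico] at hi ⊢
                    omega
                _ ≤ 1 := by simp
                _ ≤ e315 := hle
          · refine ⟨fun i => if i ≤ 1 then 1 else 0, ?_, ?_⟩
            · intro i _ hwi
              have h2 : 2 ≤ i := by by_contra h; simp [show i ≤ 1 by omega] at hwi
              calc (11 : ℕ) ≤ 7 ^ 2 := by norm_num
                _ ≤ 7 ^ i := Nat.pow_le_pow_right (by norm_num) h2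
            · have h7 : (7 : ℕ) ^ 1 ∣ 315 := by norm_num
              have hle : 1 ≤ e315 :=
                (Nat.Prime.pow_dvd_iff_le_factorization hp (by norm_num)).mp h7
              calc ∑ i ∈ I, (if i ≤ 1 then 1 else 0)
                  = (I.filter fun i => i ≤ 1).card := (Finset.card_filter _ _).symm
                _ ≤ (Finset.Ico 1 2).card := by
                    apply Finset.card_le_card
                    intro i hi
                    simp only [hI, Finset.mem_filter, Finset.mem_Ico] at hi ⊢
                    omega
                _ ≤ 1 := by simp
                _ ≤ e315 := hle
        have H := card_sum_le (I := I)
          (fun i => p ^ i ≤ n % p ^ i + n % p ^ i)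
          (fun i => p ^ i ∣ 2 * n + 1) (fun i => p ^ i ∣ 2 * n + 7)
          (fun i => p ^ i ≤ (3 * n) % p ^ i + (3 * n) % p ^ i)
          (fun i => p ^ i ≤ n % p ^ i + (2 * n) % p ^ i) w ?_
        · omega
        · intro i hi
          have hi1 : i ≠ 0 := by simp only [hI, Finset.mem_Ico] at hi; omega
          rcases Nat.eq_zero_or_pos (w i) with hw0 | hw1
          · have h11 := hwE i hi hw0
            have := levelD (q := p ^ i) (n := n) h11 (qodd i)
            omega
          · have := levelE (q := p ^ i) (n := n) (hq3 i hi1) (qodd i)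
            omega
      · push_neg at hp357
        have hp11 : 11 ≤ p := by
          by_contra h
          push_neg at h
          interval_cases p <;> first | omega | exact absurd hp (by decide)
        have H := card_sum_le (I := I)
          (fun i => p ^ i ≤ n % p ^ i + n % p ^ i)
          (fun i => p ^ i ∣ 2 * n + 1) (fun i => p ^ i ∣ 2 * n + 7)
          (fun i => p ^ i ≤ (3 * n) % p ^ i + (3 * n) % p ^ i)
          (fun i => p ^ i ≤ n % p ^ i + (2 * n) % p ^ i) (fun _ => 0) ?_
        · simp only [Finset.sum_const_zero] at H
          omega
        · intro i hi
          have hi1 : i ≠ 0 := by simp only [hI, Finset.mem_Ico] at hi; omega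
          have h11 : 11 ≤ p ^ i := le_trans hp11 (Nat.le_self_pow hi1 p)
          have := levelD (q := p ^ i) (n := n) h11 (qodd i)
          omega
    rw [e0, e1, e2, ed1, ed7, z2]
    omega

theorem S_n_mod_2n_add_7 (n : ℕ) (hn : 0 < n) :
    2 * (2 * n + 1) * (2 * n + 7) * Nat.choose (2 * n) n ∣
      315 * (Nat.choose (6 * n) (3 * n) * Nat.choose (3 * n) n) := by
  have hc0 : 0 < Nat.choose (2 * n) n := Nat.choose_pos (by omega)
  have hc1 : 0 < Nat.choose (6 * n) (3 * n) := Nat.choose_pos (by omega)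
  have hc2 : 0 < Nat.choose (3 * n) n := Nat.choose_pos (by omega)
  have hL : 2 * (2 * n + 1) * (2 * n + 7) * Nat.choose (2 * n) n ≠ 0 := by positivity
  have hR : 315 * (Nat.choose (6 * n) (3 * n) * Nat.choose (3 * n) n) ≠ 0 := by positivity
  rw [← Nat.factorization_le_iff_dvd hL hR]
  rw [Finsupp.le_def]
  intro p
  by_cases hp : p.Prime
  · rw [Nat.factorization_mul (by positivity) (by omega),
      Nat.factorization_mul (by positivity) (by omega),
      Nat.factorization_mul (by norm_num) (by omega),
      Nat.factorization_mul (by norm_num) (by positivity),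
      Nat.factorization_mul (by omega) (by omega)]
    simp only [Finsupp.add_apply]
    have := main_ineq hn hp
    omega
  · simp [Nat.factorization_eq_zero_of_not_prime _ hp]
end

section
/- For every positive integer n, the number 2(2n+1)(2n+9)·C(2n,n) divides 6435·C(6n,3n)·C(3n,n); equivalently, 6435·S_n ≡ 0 (mod 2n+9), where S_n = C(6n,3n)·C(3n,n)/(2(2n+1)·C(2n,n)). -/
open Nat Finset

private lemma div_decomp (q k r c : ℕ) (hq : 0 < q) :
    (c * (q * k + r)) / q = c * k + c * r / q := by
  rw [show c * (q * k + r) = q * (c * k) + c * r by ring, Nat.mul_add_div hq]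

/-- The basic pointwise inequality (nonnegativity of the Chebyshev-type floor sum). -/
private lemma keyA (q n : ℕ) (hq : 0 < q) :
    2 * (2 * n / q) + 3 * n / q + n / q ≤ 6 * n / q + 2 * (n / q) := by
  obtain ⟨k, r, hr, rfl⟩ : ∃ k r, r < q ∧ n = q * k + r :=
    ⟨n / q, n % q, Nat.mod_lt _ hq, (Nat.div_add_mod n q).symm⟩
  rw [div_decomp q k r 2 hq, div_decomp q k r 3 hq, div_decomp q k r 6 hq,
    show q * k + r = 1 * (q * k + r) by ring, div_decomp q k r 1 hq]
  have h1 : 3 * (2 * r / q) ≤ 6 * r / q := by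
    rw [Nat.le_div_iff_mul_le hq]
    calc 3 * (2 * r / q) * q = 3 * (2 * r / q * q) := by ring
      _ ≤ 3 * (2 * r) := by
          have := Nat.div_mul_le_self (2 * r) q
          omega
      _ = 6 * r := by ring
  have h2 : 2 * (3 * r / q) ≤ 6 * r / q := by
    rw [Nat.le_div_iff_mul_le hq]
    calc 2 * (3 * r / q) * q = 2 * (3 * r / q * q) := by ring
      _ ≤ 2 * (3 * r) := by
          have := Nat.div_mul_le_self (3 * r) q
          omega
      _ = 6 * r := by ring
  have h3 : 2 * r / q ≤ 1 := by
    have : 2 * r / q < 2 := (Nat.div_lt_iff_lt_mul hq).mpr (by omega)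
    omega
  have h4 : 3 * r / q ≤ 2 := by
    have : 3 * r / q < 3 := (Nat.div_lt_iff_lt_mul hq).mpr (by omega)
    omega
  have hg : 1 * r / q = 0 := Nat.div_eq_of_lt (by omega)
  omega

/-- If `q ∣ 2n+1`, `q ≥ 3`, the floor sum is at least 1. -/
private lemma keyB (q n : ℕ) (h3 : 3 ≤ q) (hdvd : q ∣ 2 * n + 1) :
    2 * (2 * n / q) + 3 * n / q + n / q + 1 ≤ 6 * n / q + 2 * (n / q) := by
  have hq : 0 < q := by omega
  obtain ⟨k, r, hr, rfl⟩ : ∃ k r, r < q ∧ n = q * k + r :=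
    ⟨n / q, n % q, Nat.mod_lt _ hq, (Nat.div_add_mod n q).symm⟩
  rw [div_decomp q k r 2 hq, div_decomp q k r 3 hq, div_decomp q k r 6 hq,
    show q * k + r = 1 * (q * k + r) by ring, div_decomp q k r 1 hq]
  have hd2 : q ∣ 2 * r + 1 := by
    have h : 2 * (q * k + r) + 1 = q * (2 * k) + (2 * r + 1) := by ring
    rw [h] at hdvd
    exact (Nat.dvd_add_right (dvd_mul_right q (2 * k))).mp hdvd
  have heq : 2 * r + 1 = q := by
    obtain ⟨t, ht⟩ := hd2
    have h0 : t ≠ 0 := by rintro rfl; omega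
    have h2 : ¬ 2 ≤ t := fun h => by
      have : q * 2 ≤ q * t := Nat.mul_le_mul_left q h
      omega
    have ht1 : t = 1 := by omega
    subst ht1
    omega
  have e1 : 1 * r / q = 0 := Nat.div_eq_of_lt (by omega)
  have e2 : 2 * r / q = 0 := Nat.div_eq_of_lt (by omega)
  have e3 : 3 * r / q = 1 := Nat.div_eq_of_lt_le (by omega) (by omega)
  have e4 : 6 * r / q = 2 := Nat.div_eq_of_lt_le (by omega) (by omega)
  omega

/-- If `q ∣ 2n+9`, `q` odd, `q = 7` or `q ≥ 15`, the floor sum is at least 1. -/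
private lemma keyC (q n : ℕ) (hodd : q % 2 = 1) (hq : q = 7 ∨ 15 ≤ q)
    (hdvd : q ∣ 2 * n + 9) :
    2 * (2 * n / q) + 3 * n / q + n / q + 1 ≤ 6 * n / q + 2 * (n / q) := by
  rcases hq with rfl | hq15
  · omega
  · have hq : 0 < q := by omega
    obtain ⟨k, r, hr, rfl⟩ : ∃ k r, r < q ∧ n = q * k + r :=
      ⟨n / q, n % q, Nat.mod_lt _ hq, (Nat.div_add_mod n q).symm⟩
    rw [div_decomp q k r 2 hq, div_decomp q k r 3 hq, div_decomp q k r 6 hq,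
      show q * k + r = 1 * (q * k + r) by ring, div_decomp q k r 1 hq]
    have hd2 : q ∣ 2 * r + 9 := by
      have h : 2 * (q * k + r) + 9 = q * (2 * k) + (2 * r + 9) := by ring
      rw [h] at hdvd
      exact (Nat.dvd_add_right (dvd_mul_right q (2 * k))).mp hdvd
    have heq : 2 * r + 9 = q := by
      obtain ⟨t, ht⟩ := hd2
      have h0 : t ≠ 0 := by rintro rfl; omega
      have h3 : ¬ 3 ≤ t := fun h => by
        have : q * 3 ≤ q * t := Nat.mul_le_mul_left q h
        omega
      have ht12 : t = 1 ∨ t = 2 := by omega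
      rcases ht12 with rfl | rfl
      · omega
      · omega
    rcases le_or_gt 27 q with h27 | h27
    · have e1 : 1 * r / q = 0 := Nat.div_eq_of_lt (by omega)
      have e2 : 2 * r / q = 0 := Nat.div_eq_of_lt (by omega)
      have e3 : 3 * r / q = 1 := Nat.div_eq_of_lt_le (by omega) (by omega)
      have e4 : 6 * r / q = 2 := Nat.div_eq_of_lt_le (by omega) (by omega)
      omega
    · have e1 : 1 * r / q = 0 := Nat.div_eq_of_lt (by omega)
      have e2 : 2 * r / q = 0 := Nat.div_eq_of_lt (by omega)
      have e3 : 3 * r / q = 0 := Nat.div_eq_of_lt (by omega)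
      have e4 : 6 * r / q = 1 := Nat.div_eq_of_lt_le (by omega) (by omega)
      omega

private lemma sum_lb {s D : Finset ℕ} (hDs : D ⊆ s) (f g : ℕ → ℕ)
    (h0 : ∀ i ∈ s, f i ≤ g i) (h1 : ∀ i ∈ D, f i + 1 ≤ g i) :
    (∑ i ∈ s, f i) + D.card ≤ ∑ i ∈ s, g i := by
  have key : (∑ i ∈ s, f i) + D.card = ∑ i ∈ s, (f i + if i ∈ D then 1 else 0) := by
    rw [Finset.sum_add_distrib]
    congr 1
    rw [Finset.sum_ite_mem, Finset.inter_eq_right.mpr hDs, Finset.card_eq_sum_ones]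
  rw [key]
  refine Finset.sum_le_sum fun i hi => ?_
  by_cases h : i ∈ D
  · simpa [h] using h1 i h
  · simpa [h] using h0 i hi

private lemma le_pval {p k m : ℕ} (hp : p.Prime) (hm : m ≠ 0) (h : p ^ k ∣ m) :
    k ≤ padicValNat p m := by
  rw [← Nat.factorization_def _ hp]
  exact (Nat.Prime.pow_dvd_iff_le_factorization hp hm).mp h

private lemma val_ineq (n p : ℕ) (hn : 0 < n) (hp : p.Prime) :
    (2 * (2 * n + 1) * (2 * n + 9) *
        ((2 * n)! * ((3 * n)! * ((2 * n)! * n !)))).factorization p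
      ≤ (6435 * ((6 * n)! * (n ! * n !))).factorization p := by
  haveI : Fact p.Prime := ⟨hp⟩
  set b := 8 * n + 10 with hb
  have hfac : ∀ m : ℕ, (m ! : ℕ) ≠ 0 := fun m => (Nat.factorial_pos m).ne'
  have hlog : ∀ m : ℕ, m ≤ 6 * n → Nat.log p m < b :=
    fun m hm => lt_of_le_of_lt (Nat.log_le_self _ _) (by omega)
  rw [Nat.factorization_def _ hp, Nat.factorization_def _ hp]
  rw [padicValNat.mul (by positivity) (by positivity),
      padicValNat.mul (by positivity) (by positivity),
      padicValNat.mul (by positivity) (by positivity),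
      padicValNat.mul (hfac _) (by positivity),
      padicValNat.mul (hfac _) (by positivity),
      padicValNat.mul (hfac _) (hfac _),
      padicValNat.mul (by positivity) (by positivity),
      padicValNat.mul (hfac _) (by positivity),
      padicValNat.mul (hfac _) (hfac _)]
  rw [padicValNat_factorial (hlog (2 * n) (by omega)),
      padicValNat_factorial (hlog (3 * n) (by omega)),
      padicValNat_factorial (hlog (6 * n) (by omega)),
      padicValNat_factorial (hlog n (by omega))]
  -- Now the goal is in terms of padicValNat of small numbers and Legendre sums.
  suffices h : ∃ D : Finset ℕ, D ⊆ Finset.Ico 1 b ∧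
      (∀ i ∈ D, (2 * (2 * n / p ^ i) + 3 * n / p ^ i + n / p ^ i) + 1
          ≤ 6 * n / p ^ i + 2 * (n / p ^ i)) ∧
      padicValNat p 2 + padicValNat p (2 * n + 1) + padicValNat p (2 * n + 9)
        ≤ padicValNat p 6435 + D.card by
    obtain ⟨D, hD1, hD2, hD3⟩ := h
    have hsum := sum_lb hD1
      (fun i => 2 * (2 * n / p ^ i) + 3 * n / p ^ i + n / p ^ i)
      (fun i => 6 * n / p ^ i + 2 * (n / p ^ i))
      (fun i _ => keyA (p ^ i) n (pow_pos hp.pos i)) hD2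
    simp only [Finset.sum_add_distrib, ← Finset.mul_sum] at hsum
    omega
  -- Construct the good set `D` by cases on `p`.
  rcases eq_or_ne p 2 with rfl | hp2
  · -- p = 2
    have hv1 : padicValNat 2 (2 * n + 1) = 0 := padicValNat.eq_zero_of_not_dvd (by omega)
    have hv9 : padicValNat 2 (2 * n + 9) = 0 := padicValNat.eq_zero_of_not_dvd (by omega)
    have hv2 : padicValNat 2 2 = 1 := padicValNat.self one_lt_two
    refine ⟨{Nat.log 2 (6 * n)}, ?_, ?_, ?_⟩
    · intro i hi
      simp only [Finset.mem_singleton] at hi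
      subst hi
      simp only [Finset.mem_Ico]
      constructor
      · exact Nat.le_log_of_pow_le one_lt_two (by omega)
      · exact lt_of_le_of_lt (Nat.log_le_self _ _) (by omega)
    · intro i hi
      simp only [Finset.mem_singleton] at hi
      subst hi
      have hq1 : 2 ^ Nat.log 2 (6 * n) ≤ 6 * n := Nat.pow_log_le_self 2 (by omega)
      have hq2 : 6 * n < 2 ^ Nat.log 2 (6 * n) * 2 := by
        have := Nat.lt_pow_succ_log_self one_lt_two (6 * n)
        rwa [pow_succ] at this
      set q := 2 ^ Nat.log 2 (6 * n) with hqdef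
      have e6 : 6 * n / q = 1 := Nat.div_eq_of_lt_le (by omega) (by omega)
      have e3 : 3 * n / q = 0 := Nat.div_eq_of_lt (by omega)
      have e2 : 2 * n / q = 0 := Nat.div_eq_of_lt (by omega)
      have e1 : n / q = 0 := Nat.div_eq_of_lt (by omega)
      omega
    · rw [hv1, hv9, hv2]
      simp only [Finset.card_singleton]
      omega
  · -- p odd
    have hp3 : 3 ≤ p := by
      have := hp.two_le
      rcases Nat.lt_or_ge p 3 with h | h
      · interval_cases p
        · exact absurd rfl hp2
      · exact h
    have hpodd : p % 2 = 1 := Nat.odd_iff.mp (hp.odd_of_ne_two hp2)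
    have hnd2 : ¬ p ∣ 2 := fun h => hp2 ((Nat.prime_dvd_prime_iff_eq hp Nat.prime_two).mp h)
    have hv2 : padicValNat p 2 = 0 := padicValNat.eq_zero_of_not_dvd hnd2
    by_cases h9 : p ∣ 2 * n + 9
    · -- p ∣ 2n+9, so p ∤ 2n+1
      have hnd1 : ¬ p ∣ 2 * n + 1 := by
        intro h1
        have h8 : p ∣ 8 := by
          have := Nat.dvd_sub h9 h1
          rwa [show 2 * n + 9 - (2 * n + 1) = 8 by omega] at this
        rw [show (8 : ℕ) = 2 ^ 3 by norm_num] at h8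
        exact hnd2 (hp.dvd_of_dvd_pow h8)
      have hv1 : padicValNat p (2 * n + 1) = 0 := padicValNat.eq_zero_of_not_dvd hnd1
      set e := padicValNat p (2 * n + 9) with he
      have hpe : p ^ e ∣ 2 * n + 9 := pow_padicValNat_dvd
      have heb : e < b := by
        have h1 : e < p ^ e := Nat.lt_pow_self hp.one_lt
        have h2 : p ^ e ≤ 2 * n + 9 := Nat.le_of_dvd (by omega) hpe
        omega
      have main : ∀ s : ℕ, 1 ≤ s →
          (∀ i, s ≤ i → i ≤ e → (p ^ i = 7 ∨ 15 ≤ p ^ i)) →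
          (e ≤ padicValNat p 6435 + (e + 1 - s)) →
          ∃ D : Finset ℕ, D ⊆ Finset.Ico 1 b ∧
            (∀ i ∈ D, (2 * (2 * n / p ^ i) + 3 * n / p ^ i + n / p ^ i) + 1
                ≤ 6 * n / p ^ i + 2 * (n / p ^ i)) ∧
            padicValNat p 2 + padicValNat p (2 * n + 1) + padicValNat p (2 * n + 9)
              ≤ padicValNat p 6435 + D.card := by
        intro s hs hqual hfin
        refine ⟨Finset.Ico s (e + 1), ?_, ?_, ?_⟩
        · intro i hi
          simp only [Finset.mem_Ico] at hi ⊢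
          omega
        · intro i hi
          simp only [Finset.mem_Ico] at hi
          have hdvd : p ^ i ∣ 2 * n + 9 := dvd_trans (pow_dvd_pow p (by omega)) hpe
          have hoddq : (p ^ i) % 2 = 1 := Nat.odd_iff.mp ((hp.odd_of_ne_two hp2).pow)
          exact keyC (p ^ i) n hoddq (hqual i hi.1 (by omega)) hdvd
        · rw [hv1, hv2, Nat.card_Ico]
          omega
      have h6435 : (6435 : ℕ) ≠ 0 := by norm_num
      by_cases hq3 : p = 3
      · subst hq3
        have hval : 2 ≤ padicValNat 3 6435 :=
          le_pval hp h6435 (by norm_num)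
        obtain ⟨D, hD⟩ := main 3 (by omega)
          (fun i h3i _ => by
            right
            have : 3 ^ 3 ≤ 3 ^ i := Nat.pow_le_pow_right (by omega) h3i
            omega)
          (by omega)
        exact ⟨D, hD⟩
      · by_cases hq5 : p = 5 ∨ p = 11 ∨ p = 13
        · have hval : 1 ≤ padicValNat p 6435 := by
            rcases hq5 with rfl | rfl | rfl
            · exact le_pval hp h6435 (by norm_num)
            · exact le_pval hp h6435 (by norm_num)
            · exact le_pval hp h6435 (by norm_num)
          obtain ⟨D, hD⟩ := main 2 (by omega)
            (fun i h2i _ => by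
              right
              have h1 : p ^ 2 ≤ p ^ i := Nat.pow_le_pow_right (by omega) h2i
              have h2 : 5 ^ 2 ≤ p ^ 2 := by
                rcases hq5 with rfl | rfl | rfl <;> norm_num
              omega)
            (by omega)
          exact ⟨D, hD⟩
        · -- p = 7 or p ≥ 17
          push_neg at hq5
          obtain ⟨h5, h11, h13⟩ := hq5
          have hp7 : p = 7 ∨ 17 ≤ p := by
            rcases Nat.lt_or_ge p 17 with h | h
            · interval_cases p <;> first
                | (exfalso; revert hp; decide)
                | (exact absurd rfl hq3)
                | (exact absurd rfl h5)
                | (exact absurd rfl h11)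
                | (exact absurd rfl h13)
                | (exact Or.inl rfl)
            · exact Or.inr h
          obtain ⟨D, hD⟩ := main 1 le_rfl
            (fun i h1i _ => by
              rcases hp7 with rfl | h17
              · rcases Nat.lt_or_ge i 2 with h2i | h2i
                · left
                  have : i = 1 := by omega
                  rw [this, pow_one]
                · right
                  have : 7 ^ 2 ≤ 7 ^ i := Nat.pow_le_pow_right (by omega) h2i
                  omega
              · right
                have : p ≤ p ^ i := Nat.le_self_pow (by omega) p
                omega)
            (by omega)
          exact ⟨D, hD⟩
    · -- p ∤ 2n+9
      have hv9 : padicValNat p (2 * n + 9) = 0 := padicValNat.eq_zero_of_not_dvd h9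
      set e := padicValNat p (2 * n + 1) with he
      have hpe : p ^ e ∣ 2 * n + 1 := pow_padicValNat_dvd
      have heb : e < b := by
        have h1 : e < p ^ e := Nat.lt_pow_self hp.one_lt
        have h2 : p ^ e ≤ 2 * n + 1 := Nat.le_of_dvd (by omega) hpe
        omega
      refine ⟨Finset.Ico 1 (e + 1), ?_, ?_, ?_⟩
      · intro i hi
        simp only [Finset.mem_Ico] at hi ⊢
        omega
      · intro i hi
        simp only [Finset.mem_Ico] at hi
        have hdvd : p ^ i ∣ 2 * n + 1 := dvd_trans (pow_dvd_pow p (by omega)) hpe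
        have h3q : 3 ≤ p ^ i := le_trans hp3 (Nat.le_self_pow (by omega) p)
        exact keyB (p ^ i) n h3q hdvd
      · rw [hv9, hv2, Nat.card_Ico]
        omega

theorem S_n_mod_2n_add_9 (n : ℕ) (hn : 0 < n) :
    2 * (2 * n + 1) * (2 * n + 9) * Nat.choose (2 * n) n ∣
      6435 * (Nat.choose (6 * n) (3 * n) * Nat.choose (3 * n) n) := by
  have e1 : Nat.choose (2 * n) n * n ! * n ! = (2 * n)! := by
    have h := Nat.choose_mul_factorial_mul_factorial (show n ≤ 2 * n by omega)
    rwa [show 2 * n - n = n by omega] at h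
  have e2 : Nat.choose (3 * n) n * n ! * (2 * n)! = (3 * n)! := by
    have h := Nat.choose_mul_factorial_mul_factorial (show n ≤ 3 * n by omega)
    rwa [show 3 * n - n = 2 * n by omega] at h
  have e3 : Nat.choose (6 * n) (3 * n) * (3 * n)! * (3 * n)! = (6 * n)! := by
    have h := Nat.choose_mul_factorial_mul_factorial (show 3 * n ≤ 6 * n by omega)
    rwa [show 6 * n - 3 * n = 3 * n by omega] at h
  have hM : (0 : ℕ) < (3 * n)! * ((2 * n)! * (n ! * (n ! * n !))) := by positivity
  rw [← Nat.mul_dvd_mul_iff_right hM]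
  have hA : 2 * (2 * n + 1) * (2 * n + 9) * Nat.choose (2 * n) n *
      ((3 * n)! * ((2 * n)! * (n ! * (n ! * n !)))) =
      2 * (2 * n + 1) * (2 * n + 9) * ((2 * n)! * ((3 * n)! * ((2 * n)! * n !))) := by
    rw [← e1]; ring
  have hB : 6435 * (Nat.choose (6 * n) (3 * n) * Nat.choose (3 * n) n) *
      ((3 * n)! * ((2 * n)! * (n ! * (n ! * n !)))) =
      6435 * ((6 * n)! * (n ! * n !)) := by
    rw [← e3, ← e2, ← e1]; ring
  rw [hA, hB]
  have hL : 2 * (2 * n + 1) * (2 * n + 9) * ((2 * n)! * ((3 * n)! * ((2 * n)! * n !))) ≠ 0 := by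
    positivity
  have hR : 6435 * ((6 * n)! * (n ! * n !)) ≠ 0 := by positivity
  rw [← Nat.factorization_le_iff_dvd hL hR, Finsupp.le_def]
  intro p
  by_cases hp : p.Prime
  · exact val_ineq n p hn hp
  · rw [Nat.factorization_eq_zero_of_not_prime _ hp]
    exact Nat.zero_le _
end

section
/- For all positive integers a, b, m, n, the number m+n divides a·m·C(am+bm−1, am)·C(an+bn, an). -/
open Finset

private lemma kummer_card {p n k b : ℕ} (hp : p.Prime) (hkn : k ≤ n) (hnb : Nat.log p n < b) :
    (n.choose k).factorization p =
      ((Finset.Ico 1 b).filter fun i => p ^ i ≤ k % p ^ i + (n - k) % p ^ i).card := by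
  haveI : Fact p.Prime := ⟨hp⟩
  have h0 : 0 < n.choose k := Nat.choose_pos hkn
  have h1 := padicValNat_eq_emultiplicity (p := p) h0.ne'
  have h2 := Nat.Prime.emultiplicity_choose hp hkn hnb
  rw [← h1] at h2
  rw [Nat.factorization_def _ hp]
  exact_mod_cast h2

private lemma mod_add_mod_eq {q u v : ℕ} (hq : 0 < q) (hdvd : q ∣ u + v) (hu : u % q ≠ 0) :
    u % q + v % q = q := by
  have h1 : (u + v) % q = 0 := Nat.mod_eq_zero_of_dvd hdvd
  rw [Nat.add_mod] at h1
  have h2 : q ∣ u % q + v % q := Nat.dvd_of_mod_eq_zero h1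
  have h3 : u % q < q := Nat.mod_lt _ hq
  have h4 : v % q < q := Nat.mod_lt _ hq
  obtain ⟨k, hk⟩ := h2
  have hk2 : k < 2 := by
    by_contra hc
    push_neg at hc
    have h5 : q * 2 ≤ q * k := Nat.mul_le_mul_left q hc
    rw [← hk] at h5
    omega
  interval_cases k <;> simp at hk <;> omega

private lemma pred_mod_of_dvd {q v : ℕ} (hq : 0 < q) (hv : 0 < v) (h : q ∣ v) :
    (v - 1) % q = q - 1 := by
  obtain ⟨k, rfl⟩ := h
  have hkpos : 0 < k := by
    rcases Nat.eq_zero_or_pos k with rfl | hk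
    · simp at hv
    · exact hk
  obtain ⟨k', rfl⟩ : ∃ k', k = k' + 1 := ⟨k - 1, by omega⟩
  have h1 : q * (k' + 1) - 1 = q * k' + (q - 1) := by rw [Nat.mul_add, Nat.mul_one]; omega
  rw [h1, Nat.mul_add_mod, Nat.mod_eq_of_lt (by omega)]

private lemma pred_mod_of_mod_ne {q v : ℕ} (hq : 0 < q) (h : v % q ≠ 0) :
    (v - 1) % q = v % q - 1 := by
  have h1 : v % q < q := Nat.mod_lt _ hq
  have h2 : q * (v / q) + v % q = v := Nat.div_add_mod v q
  obtain ⟨A, hA⟩ : ∃ A, A = q * (v / q) := ⟨_, rfl⟩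
  rw [← hA] at h2
  have h3 : v - 1 = A + (v % q - 1) := by omega
  rw [h3, hA, Nat.mul_add_mod, Nat.mod_eq_of_lt (by omega)]

theorem m_add_n_dvd (a b m n : ℕ) (ha : 0 < a) (hb : 0 < b) (hm : 0 < m) (hn : 0 < n) :
    m + n ∣ a * m * Nat.choose (a * m + b * m - 1) (a * m) * Nat.choose (a * n + b * n) (a * n) := by
  have ham : 0 < a * m := Nat.mul_pos ha hm
  have hbm : 0 < b * m := Nat.mul_pos hb hm
  have han : 0 < a * n := Nat.mul_pos ha hn
  have hbn : 0 < b * n := Nat.mul_pos hb hn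
  have hma : m ≤ a * m := Nat.le_mul_of_pos_left m ha
  have hna : n ≤ a * n := Nat.le_mul_of_pos_left n ha
  set N1 := a * m + b * m - 1 with hN1
  set N2 := a * n + b * n with hN2
  have hk1 : a * m ≤ N1 := by omega
  have hk2 : a * n ≤ N2 := by omega
  set X := Nat.choose N1 (a * m) with hXdef
  set Y := Nat.choose N2 (a * n) with hYdef
  have hX : 0 < X := Nat.choose_pos hk1
  have hY : 0 < Y := Nat.choose_pos hk2
  rw [← Nat.factorization_le_iff_dvd (by omega) (by positivity)]
  rw [Finsupp.le_def]
  intro p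
  by_cases hp : p.Prime
  · -- rewrite the RHS factorization
    have hrw : (a * m * X * Y).factorization p
        = a.factorization p + m.factorization p + X.factorization p + Y.factorization p := by
      rw [Nat.factorization_mul (by positivity) hY.ne', Nat.factorization_mul (by positivity) hX.ne',
        Nat.factorization_mul ha.ne' hm.ne']
      simp
    rw [hrw]
    set e := (m + n).factorization p with he
    set c := a.factorization p + m.factorization p with hc
    by_cases hec : e ≤ c
    · omega
    push_neg at hec
    -- bound for Kummer
    set B := N1 + N2 + 2 with hB
    have hlog1 : Nat.log p N1 < B := by have := Nat.log_le_self p N1; omega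
    have hlog2 : Nat.log p N2 < B := by have := Nat.log_le_self p N2; omega
    have heB : e + 1 ≤ B := by
      have h1 : p ^ e ∣ m + n := Nat.ordProj_dvd _ _
      have h2 : p ^ e ≤ m + n := Nat.le_of_dvd (by omega) h1
      have h3 : e < p ^ e := Nat.lt_pow_self (n := e) hp.one_lt
      omega
    have hXf := kummer_card hp hk1 hlog1
    have hYf := kummer_card hp hk2 hlog2
    set Sx := (Finset.Ico 1 B).filter fun i => p ^ i ≤ (a*m) % p ^ i + (N1 - a*m) % p ^ i with hSx
    set Sy := (Finset.Ico 1 B).filter fun i => p ^ i ≤ (a*n) % p ^ i + (N2 - a*n) % p ^ i with hSy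
    have hsubset : Finset.Ico (c + 1) (e + 1) ⊆ Sx ∪ Sy := by
      intro i hi
      rw [Finset.mem_Ico] at hi
      have hi1 : 1 ≤ i := by omega
      have hiB : i < B := by omega
      have hq0 : 0 < p ^ i := Nat.pow_pos (n := i) hp.pos
      have hqmn : p ^ i ∣ m + n :=
        (Nat.Prime.pow_dvd_iff_le_factorization hp (by omega)).mpr (by omega)
      have hqam : ¬ p ^ i ∣ a * m := by
        intro hdvd
        have h5 := (Nat.Prime.pow_dvd_iff_le_factorization hp (by positivity)).mp hdvd
        rw [Nat.factorization_mul ha.ne' hm.ne', Finsupp.add_apply] at h5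
        omega
      have hdvd_a : p ^ i ∣ a * m + a * n := by
        have := hqmn.mul_left a; rwa [Nat.mul_add] at this
      have hdvd_b : p ^ i ∣ b * m + b * n := by
        have := hqmn.mul_left b; rwa [Nat.mul_add] at this
      have hxne : a * m % p ^ i ≠ 0 := fun h => hqam (Nat.dvd_of_mod_eq_zero h)
      have hxan : a * m % p ^ i + a * n % p ^ i = p ^ i := mod_add_mod_eq hq0 hdvd_a hxne
      have hN1sub : N1 - a * m = b * m - 1 := by omega
      have hN2sub : N2 - a * n = b * n := by omega
      have hxlt : a * m % p ^ i < p ^ i := Nat.mod_lt _ hq0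
      by_cases hy : b * m % p ^ i = 0
      · -- q ∣ b*m : carry in the m-pair
        apply Finset.mem_union_left
        rw [hSx, Finset.mem_filter, Finset.mem_Ico]
        refine ⟨⟨hi1, hiB⟩, ?_⟩
        rw [hN1sub, pred_mod_of_dvd hq0 hbm (Nat.dvd_of_mod_eq_zero hy)]
        omega
      · have hybn : b * m % p ^ i + b * n % p ^ i = p ^ i := mod_add_mod_eq hq0 hdvd_b hy
        have hylt : b * m % p ^ i < p ^ i := Nat.mod_lt _ hq0
        by_cases hxy : a * m % p ^ i + b * m % p ^ i ≤ p ^ i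
        · -- carry in the n-pair
          apply Finset.mem_union_right
          rw [hSy, Finset.mem_filter, Finset.mem_Ico]
          refine ⟨⟨hi1, hiB⟩, ?_⟩
          rw [hN2sub]
          omega
        · apply Finset.mem_union_left
          rw [hSx, Finset.mem_filter, Finset.mem_Ico]
          refine ⟨⟨hi1, hiB⟩, ?_⟩
          rw [hN1sub, pred_mod_of_mod_ne hq0 hy]
          omega
    have hcard : e - c ≤ Sx.card + Sy.card := by
      have h1 : (Finset.Ico (c + 1) (e + 1)).card ≤ (Sx ∪ Sy).card :=
        Finset.card_le_card hsubset
      have h2 : (Sx ∪ Sy).card ≤ Sx.card + Sy.card := Finset.card_union_le _ _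
      rw [Nat.card_Ico] at h1
      omega
    rw [hXf, hYf]
    omega
  · simp [Nat.factorization_eq_zero_of_not_prime _ hp]
end

section
/- For all positive integers m and n, the number 2(m+n) divides m·C(2m,m)·C(2n,n). -/
open Nat Finset

private lemma aux_div (k m n : ℕ) (hk : 0 < k) :
    m / k + n / k + (m + n) / k ≤ 2 * m / k + 2 * n / k := by
  have hm := Nat.mod_lt m hk
  have hn := Nat.mod_lt n hk
  rw [two_mul m, two_mul n, Nat.add_div hk, Nat.add_div hk, Nat.add_div hk]
  split_ifs <;> omega

private lemma one_le_digit_sum (k : ℕ) (hk : k ≠ 0) : 1 ≤ (Nat.digits 2 k).sum := by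
  by_contra h
  push_neg at h
  have hs : (Nat.digits 2 k).sum = 0 := by omega
  have hne : Nat.digits 2 k ≠ [] := Nat.digits_ne_nil_iff_ne_zero.mpr hk
  have hlast := Nat.getLast_digit_ne_zero 2 hk
  have hmem : (Nat.digits 2 k).getLast hne ∈ Nat.digits 2 k := List.getLast_mem hne
  have : (Nat.digits 2 k).getLast hne = 0 := by
    have := List.sum_eq_zero_iff.mp hs
    exact this _ hmem
  exact hlast this

private lemma digit_sum_two_mul (m : ℕ) :
    (Nat.digits 2 (2 * m)).sum = (Nat.digits 2 m).sum := by
  rcases Nat.eq_zero_or_pos m with rfl | hm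
  · simp
  · rw [Nat.digits_def' (by norm_num : 1 < 2) (by omega)]
    simp [Nat.mul_div_cancel_left m (by norm_num : 0 < 2), Nat.mul_mod_right]

private lemma fact_dvd (m n : ℕ) (h : 0 < m + n) :
    2 * (m.factorial * n.factorial * (m + n).factorial) ∣
      (2 * m).factorial * (2 * n).factorial := by
  have hL : 2 * (m.factorial * n.factorial * (m + n).factorial) ≠ 0 := by positivity
  have hR : (2 * m).factorial * (2 * n).factorial ≠ 0 := by positivity
  rw [← Nat.factorization_le_iff_dvd hL hR]
  rw [Finsupp.le_def]
  intro p
  by_cases hp : p.Prime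
  · haveI : Fact p.Prime := ⟨hp⟩
    rw [Nat.factorization_mul two_ne_zero (by positivity),
        Nat.factorization_mul (by positivity : m.factorial * n.factorial ≠ 0) (by positivity),
        Nat.factorization_mul (by positivity : m.factorial ≠ 0) (by positivity),
        Nat.factorization_mul (by positivity : (2*m).factorial ≠ 0) (by positivity)]
    simp only [Finsupp.add_apply, Nat.factorization_def _ hp]
    by_cases hp2 : p = 2
    · subst hp2
      have v2 : ∀ k : ℕ, padicValNat 2 k.factorial = k - (Nat.digits 2 k).sum := by
        intro k
        have := sub_one_mul_padicValNat_factorial (p := 2) k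
        simpa using this
      have vself : padicValNat 2 2 = 1 := padicValNat.self (by norm_num)
      rw [vself, v2, v2, v2, v2, v2, digit_sum_two_mul, digit_sum_two_mul]
      have d1 := Nat.digit_sum_le 2 m
      have d2 := Nat.digit_sum_le 2 n
      have d3 := Nat.digit_sum_le 2 (m + n)
      have d4 := one_le_digit_sum (m + n) (by omega)
      omega
    · have hv2 : padicValNat p 2 = 0 := by
        apply padicValNat.eq_zero_of_not_dvd
        intro hdvd
        rcases (Nat.prime_two.eq_one_or_self_of_dvd p hdvd) with h1 | h1
        · exact hp.one_lt.ne' h1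
        · exact hp2 h1
      rw [hv2, zero_add]
      set b := 2 * (m + n) + 2 with hb
      have hlog : ∀ x : ℕ, x ≤ 2 * (m + n) → Nat.log p x < b := by
        intro x hx
        calc Nat.log p x ≤ x := Nat.log_le_self p x
        _ < b := by omega
      rw [padicValNat_factorial (hlog m (by omega)),
          padicValNat_factorial (hlog n (by omega)),
          padicValNat_factorial (hlog (m + n) (by omega)),
          padicValNat_factorial (hlog (2 * m) (by omega)),
          padicValNat_factorial (hlog (2 * n) (by omega))]
      rw [← Finset.sum_add_distrib, ← Finset.sum_add_distrib, ← Finset.sum_add_distrib]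
      apply Finset.sum_le_sum
      intro i _
      exact aux_div (p ^ i) m n (pow_pos hp.pos i)
  · simp [Nat.factorization_eq_zero_of_not_prime _ hp]

theorem two_m_add_n_dvd (m n : ℕ) (hm : 0 < m) (hn : 0 < n) :
    2 * (m + n) ∣ m * Nat.choose (2 * m) m * Nat.choose (2 * n) n := by
  have e1 : (2 * m).factorial = Nat.choose (2 * m) m * m.factorial * m.factorial := by
    have := Nat.choose_mul_factorial_mul_factorial (show m ≤ 2 * m by omega)
    rw [show 2 * m - m = m by omega] at this
    exact this.symm
  have e2 : (2 * n).factorial = Nat.choose (2 * n) n * n.factorial * n.factorial := by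
    have := Nat.choose_mul_factorial_mul_factorial (show n ≤ 2 * n by omega)
    rw [show 2 * n - n = n by omega] at this
    exact this.symm
  have e3 : (m + n).factorial = Nat.choose (m + n) m * m.factorial * n.factorial := by
    have := Nat.choose_mul_factorial_mul_factorial (show m ≤ m + n by omega)
    rw [show m + n - m = n by omega] at this
    exact this.symm
  have hX : (0:ℕ) < m.factorial * n.factorial * (m.factorial * n.factorial) := by positivity
  have key : 2 * Nat.choose (m + n) m ∣ Nat.choose (2 * m) m * Nat.choose (2 * n) n := by
    have h' : 2 * Nat.choose (m + n) m *
        (m.factorial * n.factorial * (m.factorial * n.factorial)) ∣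
        Nat.choose (2 * m) m * Nat.choose (2 * n) n *
        (m.factorial * n.factorial * (m.factorial * n.factorial)) := by
      calc 2 * Nat.choose (m + n) m *
          (m.factorial * n.factorial * (m.factorial * n.factorial))
          = 2 * (m.factorial * n.factorial * (m + n).factorial) := by rw [e3]; ring
        _ ∣ (2 * m).factorial * (2 * n).factorial := fact_dvd m n (by omega)
        _ = Nat.choose (2 * m) m * Nat.choose (2 * n) n *
            (m.factorial * n.factorial * (m.factorial * n.factorial)) := by
            rw [e1, e2]; ring
    exact (Nat.mul_dvd_mul_iff_right hX).mp h'
  obtain ⟨S, hS⟩ := key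
  have hid : (m + n) * Nat.choose (m + n - 1) (m - 1) = Nat.choose (m + n) m * m := by
    have := Nat.add_one_mul_choose_eq (m + n - 1) (m - 1)
    rw [show m + n - 1 + 1 = m + n by omega, show m - 1 + 1 = m by omega] at this
    simpa using this
  refine ⟨Nat.choose (m + n - 1) (m - 1) * S, ?_⟩
  calc m * Nat.choose (2 * m) m * Nat.choose (2 * n) n
      = m * (Nat.choose (2 * m) m * Nat.choose (2 * n) n) := by ring
    _ = m * (2 * Nat.choose (m + n) m * S) := by rw [hS]
    _ = 2 * (Nat.choose (m + n) m * m) * S := by ring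
    _ = 2 * ((m + n) * Nat.choose (m + n - 1) (m - 1)) * S := by rw [← hid]
    _ = 2 * (m + n) * (Nat.choose (m + n - 1) (m - 1) * S) := by ring
end

section
/- For every real number x, ⌊6x⌋ + ⌊x⌋ ≥ ⌊3x⌋ + 2⌊2x⌋. -/
lemma floor_mul_div (x : ℝ) (d : ℤ) (hd : 0 < d) : ⌊x⌋ = ⌊(d : ℝ) * x⌋ / d := by
  set m := ⌊(d : ℝ) * x⌋ with hm
  have h1 : (m : ℝ) ≤ d * x := Int.floor_le _
  have h2 : (d : ℝ) * x < m + 1 := Int.lt_floor_add_one _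
  have e1 : (m / d) * d ≤ m := Int.ediv_mul_le m (by omega)
  have e2 : m < (m / d + 1) * d := Int.lt_ediv_add_one_mul_self m hd
  have hd' : (0 : ℝ) < d := by exact_mod_cast hd
  rw [Int.floor_eq_iff]
  constructor
  · have : ((m / d : ℤ) : ℝ) * d ≤ m := by exact_mod_cast e1
    nlinarith
  · have e2' : m + 1 ≤ (m / d + 1) * d := e2
    have : (m : ℝ) + 1 ≤ ((m / d : ℤ) + 1) * d := by exact_mod_cast e2'
    nlinarith

theorem floor_ineq_6x (x : ℝ) :
    ⌊3 * x⌋ + 2 * ⌊2 * x⌋ ≤ ⌊6 * x⌋ + ⌊x⌋ := by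
  have h1 : ⌊x⌋ = ⌊6 * x⌋ / 6 := by
    have := floor_mul_div x 6 (by norm_num); simpa using this
  have h2 : ⌊2 * x⌋ = ⌊6 * x⌋ / 3 := by
    have := floor_mul_div (2 * x) 3 (by norm_num)
    push_cast at this; rw [show (3 : ℝ) * (2 * x) = 6 * x by ring] at this
    simpa using this
  have h3 : ⌊3 * x⌋ = ⌊6 * x⌋ / 2 := by
    have := floor_mul_div (3 * x) 2 (by norm_num)
    push_cast at this; rw [show (2 : ℝ) * (3 * x) = 6 * x by ring] at this
    simpa using this
  omega
end

section
/- For every real number x, ⌊15x⌋ + ⌊2x⌋ ≥ ⌊10x⌋ + ⌊4x⌋ + ⌊3x⌋. -/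
lemma my_floor_div_int (a : ℝ) (d : ℤ) (hd : 0 < d) : ⌊a / d⌋ = ⌊a⌋ / d := by
  have hd' : (0:ℝ) < d := by exact_mod_cast hd
  have h1 : (⌊a⌋ / d) * d ≤ ⌊a⌋ := Int.ediv_mul_le _ hd.ne'
  have h2 : ⌊a⌋ + 1 ≤ (⌊a⌋ / d + 1) * d := Int.lt_ediv_add_one_mul_self _ hd
  rw [Int.floor_eq_iff]
  constructor
  · rw [le_div_iff₀ hd']
    calc ((⌊a⌋ / d : ℤ) : ℝ) * d ≤ (⌊a⌋ : ℝ) := by exact_mod_cast h1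
      _ ≤ a := Int.floor_le a
  · rw [div_lt_iff₀ hd']
    calc a < (⌊a⌋ : ℝ) + 1 := Int.lt_floor_add_one a
      _ ≤ ((⌊a⌋ / d + 1 : ℤ) : ℝ) * d := by exact_mod_cast h2
      _ = (((⌊a⌋ / d : ℤ) : ℝ) + 1) * d := by push_cast; ring

theorem floor_ineq_15x (x : ℝ) :
    ⌊10 * x⌋ + ⌊4 * x⌋ + ⌊3 * x⌋ ≤ ⌊15 * x⌋ + ⌊2 * x⌋ := by
  have key : ∀ d : ℤ, 0 < d → ⌊(60 / (d:ℝ)) * x⌋ = ⌊60 * x⌋ / d := by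
    intro d hd
    have hd' : (d:ℝ) ≠ 0 := by positivity
    rw [show (60 / (d:ℝ)) * x = (60 * x) / d by field_simp]
    exact my_floor_div_int _ d hd
  have h10 := key 6 (by norm_num)
  have h4 := key 15 (by norm_num)
  have h3 := key 20 (by norm_num)
  have h15 := key 4 (by norm_num)
  have h2 := key 30 (by norm_num)
  norm_num at h10 h4 h3 h15 h2
  rw [h10, h4, h3, h15, h2]
  omega
end

section
/- Let m and n be positive integers such that m divides 2n+3 and m ≥ 5. Then ⌊6n/m⌋ + ⌊n/m⌋ = ⌊3n/m⌋ + 2⌊2n/m⌋ + 1. -/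
theorem floor_eq_of_dvd_two_n_add_three (m n : ℕ) (hm : 0 < m) (hn : 0 < n)
    (hdvd : m ∣ 2 * n + 3) (hm5 : 5 ≤ m) :
    6 * n / m + n / m = 3 * n / m + 2 * (2 * n / m) + 1 := by
  obtain ⟨q, r, hrm, hqr⟩ : ∃ q r, r < m ∧ n = m * q + r :=
    ⟨n / m, n % m, Nat.mod_lt n hm, (Nat.div_add_mod n m).symm⟩
  subst hqr
  -- m divides 2r+3
  have hdvd' : m ∣ 2 * r + 3 := by
    obtain ⟨c, hc⟩ := hdvd
    have hc' : m * c = m * (2 * q) + (2 * r + 3) := by rw [← hc]; ring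
    refine ⟨c - 2 * q, ?_⟩
    have hcq : 2 * q ≤ c := by
      by_contra h
      push_neg at h
      have : m * c < m * (2 * q) := (Nat.mul_lt_mul_left hm).mpr h
      omega
    rw [Nat.mul_sub]
    omega
  obtain ⟨d, hd⟩ := hdvd'
  have hd1 : d = 1 := by
    rcases Nat.lt_or_ge d 3 with h3 | h3
    · interval_cases d <;> omega
    · have : m * 3 ≤ m * d := Nat.mul_le_mul_left m h3
      omega
  subst hd1
  have hm' : m = 2 * r + 3 := by omega
  have key : ∀ k, k * (m * q + r) / m = k * q + k * r / m := by
    intro k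
    have h : k * (m * q + r) = m * (k * q) + k * r := by ring
    rw [h, Nat.mul_add_div hm]
  have key1 : (m * q + r) / m = q + r / m := by
    have h : m * q + r = m * q + r := rfl
    rw [Nat.mul_add_div hm]
  rw [key 6, key 3, key 2, key1]
  have h1 : r / m = 0 := Nat.div_eq_of_lt (by omega)
  have h2 : 2 * r / m = 0 := Nat.div_eq_of_lt (by omega)
  rcases Nat.lt_or_ge r 3 with h3 | h3
  · have hr1 : 1 ≤ r := by omega
    interval_cases r
    · subst hm'; omega
    · subst hm'; omega
  · have h6 : 6 * r / m = 2 := Nat.div_eq_of_lt_le (by omega) (by omega)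
    have h7 : 3 * r / m = 1 := Nat.div_eq_of_lt_le (by omega) (by omega)
    omega
end

section
/- Let m and n be positive integers such that m divides 10n+3 and m ≥ 9. Then ⌊15n/m⌋ + ⌊2n/m⌋ = ⌊10n/m⌋ + ⌊4n/m⌋ + ⌊3n/m⌋ + 1. -/
theorem floor_eq_of_dvd_ten_n_add_three (m n : ℕ) (hm : 0 < m) (hn : 0 < n)
    (hdvd : m ∣ 10 * n + 3) (hm9 : 9 ≤ m) :
    15 * n / m + 2 * n / m = 10 * n / m + 4 * n / m + 3 * n / m + 1 := by
  set t := n % m with ht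
  set q := n / m with hqdef
  have hq : m * q + t = n := Nat.div_add_mod n m
  have htm : t < m := Nat.mod_lt n hm
  have hred : ∀ c : ℕ, c * n / m = c * q + c * t / m := by
    intro c
    have h1 : c * n = c * t + m * (c * q) := by rw [← hq]; ring
    rw [h1, Nat.add_mul_div_left _ _ hm]
    omega
  rw [hred 15, hred 2, hred 10, hred 4, hred 3]
  have htd : m ∣ 10 * t + 3 := by
    have : 10 * n + 3 = 10 * t + 3 + m * (10 * q) := by rw [← hq]; ring
    rw [this] at hdvd
    exact (Nat.dvd_add_right ⟨10 * q, rfl⟩).mp (by rwa [Nat.add_comm] at hdvd)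
  obtain ⟨k, hk⟩ := htd
  have hk1 : 1 ≤ k := Nat.pos_of_ne_zero (by rintro rfl; omega)
  have hk10 : k ≤ 10 := by
    by_contra h
    push_neg at h
    nlinarith
  suffices h : 15 * t / m + 2 * t / m = 10 * t / m + 4 * t / m + 3 * t / m + 1 by omega
  interval_cases k
  · -- k = 1 : m ≡ 3 mod 10
    rw [show 15 * t / m = 1 from Nat.div_eq_of_lt_le (by omega) (by omega),
        show 2 * t / m = 0 from Nat.div_eq_of_lt (by omega),
        show 10 * t / m = 0 from Nat.div_eq_of_lt (by omega),
        show 4 * t / m = 0 from Nat.div_eq_of_lt (by omega),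
        show 3 * t / m = 0 from Nat.div_eq_of_lt (by omega)]
  · omega
  · -- k = 3 : m ≡ 1 mod 10
    rw [show 15 * t / m = 4 from Nat.div_eq_of_lt_le (by omega) (by omega),
        show 2 * t / m = 0 from Nat.div_eq_of_lt (by omega),
        show 10 * t / m = 2 from Nat.div_eq_of_lt_le (by omega) (by omega),
        show 4 * t / m = 1 from Nat.div_eq_of_lt_le (by omega) (by omega),
        show 3 * t / m = 0 from Nat.div_eq_of_lt (by omega)]
  · omega
  · omega
  · omega
  · -- k = 7 : m ≡ 9 mod 10
    rw [show 15 * t / m = 10 from Nat.div_eq_of_lt_le (by omega) (by omega),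
        show 2 * t / m = 1 from Nat.div_eq_of_lt_le (by omega) (by omega),
        show 10 * t / m = 6 from Nat.div_eq_of_lt_le (by omega) (by omega),
        show 4 * t / m = 2 from Nat.div_eq_of_lt_le (by omega) (by omega),
        show 3 * t / m = 2 from Nat.div_eq_of_lt_le (by omega) (by omega)]
  · omega
  · -- k = 9 : m ≡ 7 mod 10
    rw [show 15 * t / m = 13 from Nat.div_eq_of_lt_le (by omega) (by omega),
        show 2 * t / m = 1 from Nat.div_eq_of_lt_le (by omega) (by omega),
        show 10 * t / m = 8 from Nat.div_eq_of_lt_le (by omega) (by omega),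
        show 4 * t / m = 3 from Nat.div_eq_of_lt_le (by omega) (by omega),
        show 3 * t / m = 2 from Nat.div_eq_of_lt_le (by omega) (by omega)]
  · omega
end

section
/- Let m and n be positive integers such that either (m divides 2n+5 and m ≥ 9), or (m divides 2n+7 and m ≥ 11), or (m divides 2n+9 and m ≥ 15). Then ⌊6n/m⌋ + ⌊n/m⌋ = ⌊3n/m⌋ + 2⌊2n/m⌋ + 1. -/
lemma floor_aux_lemma4 (m n c : ℕ) (hm : 0 < m) (hodd : c % 2 = 1) (hc : 3 * c < 2 * m)
    (hdvd : m ∣ 2 * n + c) :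
    6 * n / m + n / m = 3 * n / m + 2 * (2 * n / m) + 1 := by
  have hrm : n % m < m := Nat.mod_lt _ hm
  have hqr : m * (n / m) + n % m = n := Nat.div_add_mod n m
  set q := n / m with hq
  set r := n % m with hr
  have hmod : (2 * r + c) % m = 0 := by
    have heq : 2 * r + c + m * (2 * q) = 2 * n + c := by rw [← hqr]; ring
    have h2 : (2 * n + c) % m = 0 := Nat.eq_zero_of_dvd_of_lt hdvd |> fun _ => Nat.mod_eq_zero_of_dvd hdvd
    calc (2 * r + c) % m = (2 * r + c + m * (2 * q)) % m :=
          (Nat.add_mul_mod_self_left _ _ _).symm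
      _ = (2 * n + c) % m := by rw [heq]
      _ = 0 := h2
  obtain ⟨t, ht⟩ := Nat.dvd_of_mod_eq_zero hmod
  have hcm : c < m := by omega
  have ht3 : t < 3 := by
    by_contra hcon
    push_neg at hcon
    have := Nat.mul_le_mul_left m hcon
    omega
  have hkey : 2 * r + c = m := by interval_cases t <;> omega
  have e1 : n / m = q := rfl
  have e6 : 6 * n / m = 6 * q + 6 * r / m := by
    rw [← hqr, show 6 * (m * q + r) = 6 * r + m * (6 * q) by ring,
      Nat.add_mul_div_left _ _ hm]
    omega
  have e3 : 3 * n / m = 3 * q + 3 * r / m := by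
    rw [← hqr, show 3 * (m * q + r) = 3 * r + m * (3 * q) by ring,
      Nat.add_mul_div_left _ _ hm]
    omega
  have e2 : 2 * n / m = 2 * q + 2 * r / m := by
    rw [← hqr, show 2 * (m * q + r) = 2 * r + m * (2 * q) by ring,
      Nat.add_mul_div_left _ _ hm]
    omega
  have d2 : 2 * r / m = 0 := Nat.div_eq_of_lt (by omega)
  by_cases hbig : 3 * c ≤ m
  · have d3 : 3 * r / m = 1 := Nat.div_eq_of_lt_le (by omega) (by omega)
    have d6 : 6 * r / m = 2 := Nat.div_eq_of_lt_le (by omega) (by omega)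
    rw [e6, e3, e2, d2, d3, d6]
    omega
  · have d3 : 3 * r / m = 0 := Nat.div_eq_of_lt (by omega)
    have d6 : 6 * r / m = 1 := Nat.div_eq_of_lt_le (by omega) (by omega)
    rw [e6, e3, e2, d2, d3, d6]
    omega

theorem floor_eq_lemma4 (m n : ℕ) (hm : 0 < m) (hn : 0 < n)
    (h : (m ∣ 2 * n + 5 ∧ 9 ≤ m) ∨ (m ∣ 2 * n + 7 ∧ 11 ≤ m) ∨ (m ∣ 2 * n + 9 ∧ 15 ≤ m)) :
    6 * n / m + n / m = 3 * n / m + 2 * (2 * n / m) + 1 := by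
  rcases h with ⟨hd, hge⟩ | ⟨hd, hge⟩ | ⟨hd, hge⟩
  · exact floor_aux_lemma4 m n 5 hm rfl (by omega) hd
  · exact floor_aux_lemma4 m n 7 hm rfl (by omega) hd
  · exact floor_aux_lemma4 m n 9 hm rfl (by omega) hd
end

section
/- Let n be a positive integer. Then, in ℤ[q]: (i) (1 − q^{10n+1}) · [10n]! · [4n]! · [3n]! divides (1 − q) · [15n]! · [2n]!; and (ii) (1 − q)(1 − q^{10n+3}) · [10n]! · [4n]! · [3n]! divides (1 − q³)(1 − q⁷) · [15n]! · [2n]!. -/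
open Polynomial

/-- The polynomial `[k]! = ∏_{i=1}^{k} (1 - q^i)` in `ℤ[q]`. -/
noncomputable def qFac (k : ℕ) : Polynomial ℤ :=
  ∏ i ∈ Finset.range k, (1 - Polynomial.X ^ (i + 1))

namespace QDiv15

lemma ioc_succ (k : ℕ) : Finset.Ioc 0 (k+1) = insert (k+1) (Finset.Ioc 0 k) := by
  ext x; simp only [Finset.mem_Ioc, Finset.mem_insert]; omega

lemma filter_dvd_eq_divisors {k N : ℕ} (h0 : 0 < k) (h : k ≤ N) :
    (Finset.Ioc 0 N).filter (· ∣ k) = k.divisors := by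
  ext d
  simp only [Finset.mem_filter, Finset.mem_Ioc, Nat.mem_divisors]
  constructor
  · rintro ⟨⟨-, -⟩, h3⟩; exact ⟨h3, h0.ne'⟩
  · rintro ⟨hd, -⟩
    exact ⟨⟨Nat.pos_of_dvd_of_pos hd h0, le_trans (Nat.le_of_dvd h0 hd) h⟩, hd⟩

lemma prod_ite_pow (s : Finset ℕ) (p : ℕ → Prop) [DecidablePred p] :
    ∏ d ∈ s, cyclotomic d ℤ ^ (if p d then 1 else 0) =
      ∏ d ∈ s.filter p, cyclotomic d ℤ := by
  rw [Finset.prod_filter]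
  exact Finset.prod_congr rfl fun d _ => by split <;> simp

lemma prod_X_pow_sub_one (k : ℕ) :
    ∏ i ∈ Finset.range k, ((X : Polynomial ℤ) ^ (i+1) - 1) =
      ∏ d ∈ Finset.Ioc 0 k, cyclotomic d ℤ ^ (k / d) := by
  induction k with
  | zero => simp
  | succ k ih =>
    have hX : (X : Polynomial ℤ) ^ (k+1) - 1 =
        cyclotomic (k+1) ℤ * ∏ d ∈ (Finset.Ioc 0 k).filter (· ∣ (k+1)), cyclotomic d ℤ := by
      rw [← prod_cyclotomic_eq_X_pow_sub_one (Nat.succ_pos k) ℤ,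
        ← filter_dvd_eq_divisors (Nat.succ_pos k) (le_refl (k+1)), ioc_succ,
        Finset.filter_insert, if_pos dvd_rfl, Finset.prod_insert (by simp)]
    have hR : ∏ d ∈ Finset.Ioc 0 (k+1), cyclotomic d ℤ ^ ((k+1) / d) =
        cyclotomic (k+1) ℤ * ((∏ d ∈ Finset.Ioc 0 k, cyclotomic d ℤ ^ (k / d)) *
          ∏ d ∈ (Finset.Ioc 0 k).filter (· ∣ (k+1)), cyclotomic d ℤ) := by
      rw [ioc_succ, Finset.prod_insert (by simp), Nat.div_self (Nat.succ_pos k), pow_one,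
        ← prod_ite_pow, ← Finset.prod_mul_distrib]
      congr 1
      refine Finset.prod_congr rfl fun d _ => ?_
      rw [← pow_add, Nat.succ_div]
    rw [Finset.prod_range_succ, ih, hX, hR]
    ring

lemma qFac_eq (k N : ℕ) (h : k ≤ N) :
    qFac k = (-1)^k * ∏ d ∈ Finset.Ioc 0 N, cyclotomic d ℤ ^ (k / d) := by
  have h1 : qFac k = (-1)^k * ∏ i ∈ Finset.range k, ((X : Polynomial ℤ) ^ (i+1) - 1) := by
    unfold qFac
    rw [show ((-1 : Polynomial ℤ))^k = ∏ _i ∈ Finset.range k, (-1 : Polynomial ℤ) by simp,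
      ← Finset.prod_mul_distrib]
    exact Finset.prod_congr rfl fun i _ => by ring
  rw [h1, prod_X_pow_sub_one]
  congr 1
  refine Finset.prod_subset (Finset.Ioc_subset_Ioc le_rfl h) ?_
  intro d hd hdk
  simp only [Finset.mem_Ioc] at hd hdk
  have : k < d := by omega
  simp [Nat.div_eq_of_lt this]

lemma one_sub_X_pow_eq (k N : ℕ) (h0 : 0 < k) (h : k ≤ N) :
    (1 - (X : Polynomial ℤ)^k) =
      -1 * ∏ d ∈ Finset.Ioc 0 N, cyclotomic d ℤ ^ (if d ∣ k then 1 else 0) := by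
  rw [prod_ite_pow, filter_dvd_eq_divisors h0 h, prod_cyclotomic_eq_X_pow_sub_one h0]
  ring

lemma combine (s : Finset ℕ) (a b : ℕ → ℕ) :
    (∏ d ∈ s, cyclotomic d ℤ ^ a d) * (∏ d ∈ s, cyclotomic d ℤ ^ b d) =
      ∏ d ∈ s, cyclotomic d ℤ ^ (a d + b d) := by
  rw [← Finset.prod_mul_distrib]
  exact Finset.prod_congr rfl fun d _ => (pow_add _ _ _).symm

lemma prod_pow_dvd (N : ℕ) (a b : ℕ → ℕ) (h : ∀ d ∈ Finset.Ioc 0 N, a d ≤ b d) :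
    (∏ d ∈ Finset.Ioc 0 N, cyclotomic d ℤ ^ a d) ∣
      ∏ d ∈ Finset.Ioc 0 N, cyclotomic d ℤ ^ b d :=
  Finset.prod_dvd_prod_of_dvd _ _ fun d hd => pow_dvd_pow _ (h d hd)

lemma div60 (k c r d : ℕ) (h : k * c = 60) (hc : 0 < c) :
    k * r / d = 60 * r / d / c := by
  rw [Nat.div_div_eq_div_mul, show 60 * r = (k * r) * c by rw [← h]; ring]
  exact (Nat.mul_div_mul_right _ _ hc).symm

lemma floorA (a d : ℕ) : 10*a/d + 4*a/d + 3*a/d ≤ 15*a/d + 2*a/d := by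
  rcases Nat.eq_zero_or_pos d with rfl | hd
  · simp
  · rw [div60 15 4 a d (by norm_num) (by norm_num),
      div60 10 6 a d (by norm_num) (by norm_num),
      div60 4 15 a d (by norm_num) (by norm_num),
      div60 3 20 a d (by norm_num) (by norm_num),
      div60 2 30 a d (by norm_num) (by norm_num)]
    set m := 60 * a / d with hm
    omega

lemma floor_strict (m : ℕ) (h2 : m % 12 = 5 ∨ m % 12 = 4) :
    m/6 + m/15 + m/20 + 1 ≤ m/4 + m/30 := by
  have h60 : m % 60 = 4 ∨ m % 60 = 5 ∨ m % 60 = 16 ∨ m % 60 = 17 ∨ m % 60 = 28 ∨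
      m % 60 = 29 ∨ m % 60 = 40 ∨ m % 60 = 41 ∨ m % 60 = 52 ∨ m % 60 = 53 := by omega
  rcases h60 with h|h|h|h|h|h|h|h|h|h <;> omega

lemma floorB (a d : ℕ) (hd : 2 ≤ d) (hdvd : d ∣ 10*a+1) :
    10*a/d + 4*a/d + 3*a/d + 1 ≤ 15*a/d + 2*a/d := by
  have hd0 : 0 < d := by omega
  have hdle : d ≤ 10*a+1 := Nat.le_of_dvd (by omega) hdvd
  obtain ⟨A, hA⟩ := hdvd
  have hA1 : 1 ≤ A := by
    rcases Nat.eq_zero_or_pos A with rfl | h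
    · simp at hA
    · exact h
  have hdodd : d % 2 = 1 := by
    rcases Nat.even_or_odd d with ⟨t, ht⟩ | ⟨t, ht⟩
    · exfalso
      have h2 : 10*a+1 = 2*(t*A) := by rw [hA, ht]; ring
      omega
    · omega
  have hAodd : A % 2 = 1 := by
    rcases Nat.even_or_odd A with ⟨t, ht⟩ | ⟨t, ht⟩
    · exfalso
      have h2 : 10*a+1 = 2*(d*t) := by rw [hA, ht]; ring
      omega
    · omega
  have hmulsix : d * (6*A) = 60*a + 6 := by
    rw [show d * (6*A) = 6*(d*A) by ring, ← hA]
    ring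
  have key : 60*a/d = 6*A - 1 ∨ 60*a/d = 6*A - 2 := by
    rcases le_or_gt 7 d with h7 | h7
    · left
      have hrep : 60*a = (d - 6) + (6*A - 1) * d := by
        rw [Nat.sub_mul, one_mul, show 6*A*d = d*(6*A) by ring, hmulsix]
        omega
      rw [hrep, Nat.add_mul_div_right _ _ hd0, Nat.div_eq_of_lt (by omega)]
      omega
    · right
      -- d is odd, 2 ≤ d < 7, so d = 3 or d = 5
      have hd35 : d = 3 ∨ d = 5 := by omega
      have hrep : 60*a = (2*d - 6) + (6*A - 2) * d := by
        rw [Nat.sub_mul, show 6*A*d = d*(6*A) by ring, hmulsix]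
        omega
      rw [hrep, Nat.add_mul_div_right _ _ hd0, Nat.div_eq_of_lt (by omega)]
      omega
  rw [div60 15 4 a d (by norm_num) (by norm_num),
    div60 10 6 a d (by norm_num) (by norm_num),
    div60 4 15 a d (by norm_num) (by norm_num),
    div60 3 20 a d (by norm_num) (by norm_num),
    div60 2 30 a d (by norm_num) (by norm_num)]
  set m := 60 * a / d with hm
  have hmod : m % 12 = 5 ∨ m % 12 = 4 := by omega
  have := floor_strict m hmod
  omega

lemma floorC (a d : ℕ) (hd : 2 ≤ d) (h3 : d ≠ 3) (h7 : d ≠ 7) (hdvd : d ∣ 10*a+3) :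
    10*a/d + 4*a/d + 3*a/d + 1 ≤ 15*a/d + 2*a/d := by
  have hd0 : 0 < d := by omega
  have hdle : d ≤ 10*a+3 := Nat.le_of_dvd (by omega) hdvd
  obtain ⟨A, hA⟩ := hdvd
  have hA1 : 1 ≤ A := by
    rcases Nat.eq_zero_or_pos A with rfl | h
    · simp at hA
    · exact h
  have hdodd : d % 2 = 1 := by
    rcases Nat.even_or_odd d with ⟨t, ht⟩ | ⟨t, ht⟩
    · exfalso
      have h2 : 10*a+3 = 2*(t*A) := by rw [hA, ht]; ring
      omega
    · omega
  have hAodd : A % 2 = 1 := by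
    rcases Nat.even_or_odd A with ⟨t, ht⟩ | ⟨t, ht⟩
    · exfalso
      have h2 : 10*a+3 = 2*(d*t) := by rw [hA, ht]; ring
      omega
    · omega
  have hd5 : d ≠ 5 := by
    rintro rfl
    omega
  have hmulsix : d * (6*A) = 60*a + 18 := by
    rw [show d * (6*A) = 6*(d*A) by ring, ← hA]
    ring
  have key : 60*a/d = 6*A - 1 ∨ 60*a/d = 6*A - 2 := by
    rcases le_or_gt 19 d with h19 | h19
    · left
      have hrep : 60*a = (d - 18) + (6*A - 1) * d := by
        rw [Nat.sub_mul, one_mul, show 6*A*d = d*(6*A) by ring, hmulsix]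
        omega
      rw [hrep, Nat.add_mul_div_right _ _ hd0, Nat.div_eq_of_lt (by omega)]
      omega
    · right
      -- d odd, 2 ≤ d < 19, d ∉ {3,5,7}, so d ∈ {9,11,13,15,17}
      have hd9 : 9 ≤ d := by omega
      have hrep : 60*a = (2*d - 18) + (6*A - 2) * d := by
        rw [Nat.sub_mul, show 6*A*d = d*(6*A) by ring, hmulsix]
        omega
      rw [hrep, Nat.add_mul_div_right _ _ hd0, Nat.div_eq_of_lt (by omega)]
      omega
  rw [div60 15 4 a d (by norm_num) (by norm_num),
    div60 10 6 a d (by norm_num) (by norm_num),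
    div60 4 15 a d (by norm_num) (by norm_num),
    div60 3 20 a d (by norm_num) (by norm_num),
    div60 2 30 a d (by norm_num) (by norm_num)]
  set m := 60 * a / d with hm
  have hmod : m % 12 = 5 ∨ m % 12 = 4 := by omega
  have := floor_strict m hmod
  omega

end QDiv15

open QDiv15 in
theorem q_divisibility_15n (n : ℕ) (hn : 0 < n) :
    ((1 - Polynomial.X ^ (10 * n + 1)) * (qFac (10 * n) * qFac (4 * n) * qFac (3 * n)) ∣
        (1 - Polynomial.X) * (qFac (15 * n) * qFac (2 * n))) ∧
    ((1 - Polynomial.X) * (1 - Polynomial.X ^ (10 * n + 3)) *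
          (qFac (10 * n) * qFac (4 * n) * qFac (3 * n)) ∣
        (1 - Polynomial.X ^ 3) * (1 - Polynomial.X ^ 7) *
          (qFac (15 * n) * qFac (2 * n))) := by
  set N := 15 * n with hN
  have hn1 : 1 ≤ n := hn
  have e1 : (1 - (X : Polynomial ℤ)) =
      -1 * ∏ d ∈ Finset.Ioc 0 N, cyclotomic d ℤ ^ (if d ∣ 1 then 1 else 0) := by
    have := one_sub_X_pow_eq 1 N (by omega) (by omega)
    rwa [pow_one] at this
  have e101 : (1 - (X : Polynomial ℤ) ^ (10*n+1)) =
      -1 * ∏ d ∈ Finset.Ioc 0 N, cyclotomic d ℤ ^ (if d ∣ 10*n+1 then 1 else 0) :=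
    one_sub_X_pow_eq _ N (by omega) (by omega)
  have e103 : (1 - (X : Polynomial ℤ) ^ (10*n+3)) =
      -1 * ∏ d ∈ Finset.Ioc 0 N, cyclotomic d ℤ ^ (if d ∣ 10*n+3 then 1 else 0) :=
    one_sub_X_pow_eq _ N (by omega) (by omega)
  have e3 : (1 - (X : Polynomial ℤ) ^ 3) =
      -1 * ∏ d ∈ Finset.Ioc 0 N, cyclotomic d ℤ ^ (if d ∣ 3 then 1 else 0) :=
    one_sub_X_pow_eq _ N (by omega) (by omega)
  have e7 : (1 - (X : Polynomial ℤ) ^ 7) =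
      -1 * ∏ d ∈ Finset.Ioc 0 N, cyclotomic d ℤ ^ (if d ∣ 7 then 1 else 0) :=
    one_sub_X_pow_eq _ N (by omega) (by omega)
  have f15 := qFac_eq (15*n) N (by omega)
  have f10 := qFac_eq (10*n) N (by omega)
  have f4 := qFac_eq (4*n) N (by omega)
  have f3 := qFac_eq (3*n) N (by omega)
  have f2 := qFac_eq (2*n) N (by omega)
  constructor
  · -- part (i)
    have hL : (1 - Polynomial.X ^ (10 * n + 1)) * (qFac (10 * n) * qFac (4 * n) * qFac (3 * n))
        = (-1)^(17*n+1) * ∏ d ∈ Finset.Ioc 0 N, cyclotomic d ℤ ^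
            ((if d ∣ 10*n+1 then 1 else 0) + (10*n/d + (4*n/d + 3*n/d))) := by
      rw [e101, f10, f4, f3, ← combine, ← combine, ← combine]
      ring
    have hR : (1 - Polynomial.X) * (qFac (15 * n) * qFac (2 * n))
        = (-1)^(17*n+1) * ∏ d ∈ Finset.Ioc 0 N, cyclotomic d ℤ ^
            ((if d ∣ 1 then 1 else 0) + (15*n/d + 2*n/d)) := by
      rw [e1, f15, f2, ← combine, ← combine]
      ring
    rw [hL, hR]
    apply mul_dvd_mul_left
    apply prod_pow_dvd
    intro d hd
    simp only [Finset.mem_Ioc] at hd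
    by_cases hd1 : d = 1
    · subst hd1
      simp only [Nat.one_dvd, if_pos, Nat.div_one]
      omega
    · have h2 : 2 ≤ d := by omega
      have hnd1 : ¬ d ∣ 1 := by rw [Nat.dvd_one]; exact hd1
      rw [if_neg hnd1]
      by_cases hdd : d ∣ 10*n+1
      · rw [if_pos hdd]
        have := floorB n d h2 hdd
        omega
      · rw [if_neg hdd]
        have := floorA n d
        omega
  · -- part (ii)
    have hL : (1 - Polynomial.X) * (1 - Polynomial.X ^ (10 * n + 3)) *
          (qFac (10 * n) * qFac (4 * n) * qFac (3 * n))
        = (-1)^(17*n+2) * ∏ d ∈ Finset.Ioc 0 N, cyclotomic d ℤ ^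
            ((if d ∣ 1 then 1 else 0) + ((if d ∣ 10*n+3 then 1 else 0) +
              (10*n/d + (4*n/d + 3*n/d)))) := by
      rw [e1, e103, f10, f4, f3, ← combine, ← combine, ← combine, ← combine]
      ring
    have hR : (1 - Polynomial.X ^ 3) * (1 - Polynomial.X ^ 7) * (qFac (15 * n) * qFac (2 * n))
        = (-1)^(17*n+2) * ∏ d ∈ Finset.Ioc 0 N, cyclotomic d ℤ ^
            ((if d ∣ 3 then 1 else 0) + ((if d ∣ 7 then 1 else 0) + (15*n/d + 2*n/d))) := by
      rw [e3, e7, f15, f2, ← combine, ← combine, ← combine]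
      ring
    rw [hL, hR]
    apply mul_dvd_mul_left
    apply prod_pow_dvd
    intro d hd
    simp only [Finset.mem_Ioc] at hd
    have hA := floorA n d
    by_cases hd1 : d = 1
    · subst hd1
      simp only [Nat.one_dvd, if_pos, Nat.div_one]
      omega
    · have h2 : 2 ≤ d := by omega
      have hnd1 : ¬ d ∣ 1 := by rw [Nat.dvd_one]; exact hd1
      rw [if_neg hnd1]
      by_cases hdd : d ∣ 10*n+3
      · rw [if_pos hdd]
        by_cases h3 : d = 3
        · subst h3
          rw [if_pos dvd_rfl]
          omega
        · by_cases h7 : d = 7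
          · subst h7
            rw [if_pos dvd_rfl]
            omega
          · have := floorC n d h2 h3 h7 hdd
            omega
      · rw [if_neg hdd]
        omega
end
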